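/- arXiv:1904.13040 — 2 statements merged into one kernel-verified Lean document; each statement's English description precedes it below -/
import Mathlib

section
/- Let λ ⊢ n with s a λ-tableau, and for a commutative ring O let S^O_λ be the dual Specht module realized as the left ideal O·S_n·Y_s. Then the quotient ℤS_n / ℤS_n·Y_s is a free ℤ-module; equivalently, Tor₁^ℤ(O, ℤS_n/ℤS_n·Y_s) = 0 for every commutative ring O. -/
open Finset Equiv MonoidAlgebra

namespace YS

variable {N : ℕ}

/-- The set of entries of a tableau `s` of shape `μ` with values in `Fin N`. -/
def entriesFinset (μ : YoungDiagram) (s : ↥μ.cells → Fin N) : Finset (Fin N) :=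
  μ.cells.attach.image s

/-- The entries in row `i` of the tableau `s`. -/
def rowFinset (μ : YoungDiagram) (s : ↥μ.cells → Fin N) (i : ℕ) : Finset (Fin N) :=
  (μ.cells.attach.filter (fun c => c.val.1 = i)).image s

/-- The entries in column `j` of the tableau `s`. -/
def colFinset (μ : YoungDiagram) (s : ↥μ.cells → Fin N) (j : ℕ) : Finset (Fin N) :=
  (μ.cells.attach.filter (fun c => c.val.2 = j)).image s

/-- The row stabilizer `R_s`: permutations fixing everything outside the entries of `s`
and permuting the entries within each row. -/
def rowStab (μ : YoungDiagram) (s : ↥μ.cells → Fin N) : Finset (Perm (Fin N)) :=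
  univ.filter fun σ =>
    (∀ x, x ∉ entriesFinset μ s → σ x = x) ∧
    ∀ i ∈ μ.cells.image Prod.fst, ∀ x ∈ rowFinset μ s i, σ x ∈ rowFinset μ s i

/-- The column stabilizer `C_s`. -/
def colStab (μ : YoungDiagram) (s : ↥μ.cells → Fin N) : Finset (Perm (Fin N)) :=
  univ.filter fun σ =>
    (∀ x, x ∉ entriesFinset μ s → σ x = x) ∧
    ∀ j ∈ μ.cells.image Prod.snd, ∀ x ∈ colFinset μ s j, σ x ∈ colFinset μ s j

/-- `{S} = ∑_{σ ∈ S} σ` in the integral group algebra. -/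
noncomputable def sumElt (S : Finset (Perm (Fin N))) : MonoidAlgebra ℤ (Perm (Fin N)) :=
  ∑ σ ∈ S, MonoidAlgebra.single σ 1

/-- `[S] = ∑_{σ ∈ S} sgn(σ) σ` in the integral group algebra. -/
noncomputable def altElt (S : Finset (Perm (Fin N))) : MonoidAlgebra ℤ (Perm (Fin N)) :=
  ∑ σ ∈ S, MonoidAlgebra.single σ ((Perm.sign σ : ℤˣ) : ℤ)

/-- The Young symmetrizer `Y_s = {R_s}[C_s]`. -/
noncomputable def youngSym (μ : YoungDiagram) (s : ↥μ.cells → Fin N) :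
    MonoidAlgebra ℤ (Perm (Fin N)) :=
  sumElt (rowStab μ s) * altElt (colStab μ s)

/-- The row stabilizer `R_{s+t}` of the combined tableau: row `i` of `s+t` consists of
the entries of row `i` of `s` together with those of row `i` of `t`. -/
def combRowStab (lam mu : YoungDiagram) (s : ↥lam.cells → Fin N) (t : ↥mu.cells → Fin N) :
    Finset (Perm (Fin N)) :=
  univ.filter fun σ =>
    (∀ x, x ∉ entriesFinset lam s ∪ entriesFinset mu t → σ x = x) ∧
    ∀ i ∈ lam.cells.image Prod.fst ∪ mu.cells.image Prod.fst,
      ∀ x ∈ rowFinset lam s i ∪ rowFinset mu t i, σ x ∈ rowFinset lam s i ∪ rowFinset mu t i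

/-- The column stabilizer `C_{s+t} = C_s C_t` of the combined tableau: the columns of `s+t`
are exactly the columns of `s` together with the columns of `t`. -/
def combColStab (lam mu : YoungDiagram) (s : ↥lam.cells → Fin N) (t : ↥mu.cells → Fin N) :
    Finset (Perm (Fin N)) :=
  univ.filter fun σ =>
    (∀ x, x ∉ entriesFinset lam s ∪ entriesFinset mu t → σ x = x) ∧
    (∀ j ∈ lam.cells.image Prod.snd, ∀ x ∈ colFinset lam s j, σ x ∈ colFinset lam s j) ∧
    (∀ j ∈ mu.cells.image Prod.snd, ∀ x ∈ colFinset mu t j, σ x ∈ colFinset mu t j)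

/-- The Young symmetrizer `Y_{s+t}` of the combined tableau `s+t` of shape `λ+μ`. -/
noncomputable def combYoungSym (lam mu : YoungDiagram) (s : ↥lam.cells → Fin N)
    (t : ↥mu.cells → Fin N) : MonoidAlgebra ℤ (Perm (Fin N)) :=
  sumElt (combRowStab lam mu s t) * altElt (combColStab lam mu s t)

/-- The (nonnegative) gcd of the coefficients of an element of the group algebra. -/
noncomputable def coeffGcd (f : MonoidAlgebra ℤ (Perm (Fin N))) : ℤ :=
  f.coeff.support.gcd f.coeff

end YS

theorem Equiv.Perm.inv_apply_self {α : Type*} (f : Equiv.Perm α) (x : α) : f⁻¹ (f x) = x := by simp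

theorem Equiv.Perm.apply_inv_self {α : Type*} (f : Equiv.Perm α) (x : α) : f (f⁻¹ x) = x := by simp

open YS

noncomputable section
namespace YSAux

variable {n : ℕ} {lam : YoungDiagram} {s : ↥lam.cells → Fin n}

/-- The tableau as an equivalence. -/
def ee (hs : Function.Bijective s) : ↥lam.cells ≃ Fin n := Equiv.ofBijective s hs

variable (hs : Function.Bijective s)
include hs

/-- Row index of the cell containing value `x` in the tableau `s`. -/
def rowS (x : Fin n) : ℕ := (((ee hs).symm x) : ℕ × ℕ).1

/-- Column index of the cell containing value `x`. -/
def colS (x : Fin n) : ℕ := (((ee hs).symm x) : ℕ × ℕ).2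

lemma ee_apply (c : ↥lam.cells) : ee hs c = s c := rfl

lemma s_symm (x : Fin n) : s ((ee hs).symm x) = x := (ee hs).apply_symm_apply x

lemma symm_apply_s (c : ↥lam.cells) : (ee hs).symm (s c) = c := (ee hs).symm_apply_apply c

lemma rowS_s (c : ↥lam.cells) : rowS hs (s c) = (c : ℕ × ℕ).1 := by
  rw [rowS, symm_apply_s]

lemma colS_s (c : ↥lam.cells) : colS hs (s c) = (c : ℕ × ℕ).2 := by
  rw [colS, symm_apply_s]

lemma cell_mem (x : Fin n) : (rowS hs x, colS hs x) ∈ lam := by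
  have h := ((ee hs).symm x).prop
  rw [YoungDiagram.mem_cells] at h
  simpa [rowS, colS] using h

lemma eq_of_row_col {x y : Fin n} (h1 : rowS hs x = rowS hs y)
    (h2 : colS hs x = colS hs y) : x = y := by
  have : (ee hs).symm x = (ee hs).symm y :=
    Subtype.ext (Prod.ext h1 h2)
  exact (ee hs).symm.injective this

lemma row_lt_card {i j : ℕ} (h : (i, j) ∈ lam) : i < lam.card := by
  have hsub : (Finset.range (i+1)).image (fun t => (t, j)) ⊆ lam.cells := by
    intro p hp
    simp only [Finset.mem_image, Finset.mem_range] at hp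
    obtain ⟨t, ht, rfl⟩ := hp
    rw [YoungDiagram.mem_cells]
    exact lam.up_left_mem (Nat.lt_succ_iff.mp ht) le_rfl h
  have := Finset.card_le_card hsub
  rw [Finset.card_image_of_injective _ (fun a b hab => by simpa using hab),
    Finset.card_range, Nat.succ_le_iff] at this
  exact this

lemma col_lt_card {i j : ℕ} (h : (i, j) ∈ lam) : j < lam.card := by
  have hsub : (Finset.range (j+1)).image (fun t => (i, t)) ⊆ lam.cells := by
    intro p hp
    simp only [Finset.mem_image, Finset.mem_range] at hp
    obtain ⟨t, ht, rfl⟩ := hp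
    rw [YoungDiagram.mem_cells]
    exact lam.up_left_mem le_rfl (Nat.lt_succ_iff.mp ht) h
  have := Finset.card_le_card hsub
  rw [Finset.card_image_of_injective _ (fun a b hab => by simpa using hab),
    Finset.card_range, Nat.succ_le_iff] at this
  exact this

lemma rowS_lt (x : Fin n) : rowS hs x < lam.card := row_lt_card hs (cell_mem hs x)

lemma colS_lt (x : Fin n) : colS hs x < lam.card := col_lt_card hs (cell_mem hs x)

lemma entries_eq_univ : entriesFinset lam s = Finset.univ := by
  apply Finset.eq_univ_iff_forall.mpr
  intro x
  exact Finset.mem_image.mpr ⟨(ee hs).symm x, Finset.mem_attach _ _, s_symm hs x⟩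

lemma mem_rowFinset {x : Fin n} {i : ℕ} : x ∈ rowFinset lam s i ↔ rowS hs x = i := by
  constructor
  · rintro hx
    rw [rowFinset, Finset.mem_image] at hx
    obtain ⟨c, hc, rfl⟩ := hx
    rw [Finset.mem_filter] at hc
    rw [rowS_s]
    exact hc.2
  · intro hx
    rw [rowFinset, Finset.mem_image]
    refine ⟨(ee hs).symm x, ?_, s_symm hs x⟩
    rw [Finset.mem_filter]
    exact ⟨Finset.mem_attach _ _, hx⟩

lemma mem_colFinset {x : Fin n} {j : ℕ} : x ∈ colFinset lam s j ↔ colS hs x = j := by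
  constructor
  · rintro hx
    rw [colFinset, Finset.mem_image] at hx
    obtain ⟨c, hc, rfl⟩ := hx
    rw [Finset.mem_filter] at hc
    rw [colS_s]
    exact hc.2
  · intro hx
    rw [colFinset, Finset.mem_image]
    refine ⟨(ee hs).symm x, ?_, s_symm hs x⟩
    rw [Finset.mem_filter]
    exact ⟨Finset.mem_attach _ _, hx⟩

lemma mem_rowStab {σ : Perm (Fin n)} :
    σ ∈ rowStab lam s ↔ ∀ x, rowS hs (σ x) = rowS hs x := by
  rw [rowStab, Finset.mem_filter]
  constructor
  · rintro ⟨-, -, h2⟩ x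
    have hi : (rowS hs x) ∈ lam.cells.image Prod.fst := by
      refine Finset.mem_image.mpr ⟨((ee hs).symm x : ℕ × ℕ), ((ee hs).symm x).prop, rfl⟩
    have := h2 _ hi x ((mem_rowFinset hs).mpr rfl)
    exact (mem_rowFinset hs).mp this
  · intro h
    refine ⟨Finset.mem_univ _, ?_, ?_⟩
    · intro x hx
      exact absurd (by rw [entries_eq_univ hs]; exact Finset.mem_univ x) hx
    · intro i _ x hx
      rw [mem_rowFinset hs] at hx ⊢
      rw [h x, hx]

lemma mem_colStab {σ : Perm (Fin n)} :
    σ ∈ colStab lam s ↔ ∀ x, colS hs (σ x) = colS hs x := by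
  rw [colStab, Finset.mem_filter]
  constructor
  · rintro ⟨-, -, h2⟩ x
    have hj : (colS hs x) ∈ lam.cells.image Prod.snd := by
      refine Finset.mem_image.mpr ⟨((ee hs).symm x : ℕ × ℕ), ((ee hs).symm x).prop, rfl⟩
    have := h2 _ hj x ((mem_colFinset hs).mpr rfl)
    exact (mem_colFinset hs).mp this
  · intro h
    refine ⟨Finset.mem_univ _, ?_, ?_⟩
    · intro x hx
      exact absurd (by rw [entries_eq_univ hs]; exact Finset.mem_univ x) hx
    · intro j _ x hx
      rw [mem_colFinset hs] at hx ⊢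
      rw [h x, hx]

lemma one_mem_rowStab : (1 : Perm (Fin n)) ∈ rowStab lam s := by
  rw [mem_rowStab hs]; intro x; rfl

lemma one_mem_colStab : (1 : Perm (Fin n)) ∈ colStab lam s := by
  rw [mem_colStab hs]; intro x; rfl

lemma mul_mem_rowStab {σ τ : Perm (Fin n)} (hσ : σ ∈ rowStab lam s)
    (hτ : τ ∈ rowStab lam s) : σ * τ ∈ rowStab lam s := by
  rw [mem_rowStab hs] at *
  intro x
  rw [Perm.mul_apply, hσ, hτ]

lemma mul_mem_colStab {σ τ : Perm (Fin n)} (hσ : σ ∈ colStab lam s)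
    (hτ : τ ∈ colStab lam s) : σ * τ ∈ colStab lam s := by
  rw [mem_colStab hs] at *
  intro x
  rw [Perm.mul_apply, hσ, hτ]

lemma inv_mem_rowStab {σ : Perm (Fin n)} (hσ : σ ∈ rowStab lam s) :
    σ⁻¹ ∈ rowStab lam s := by
  rw [mem_rowStab hs] at *
  intro x
  conv_rhs => rw [← Perm.apply_inv_self σ x]
  rw [hσ]

lemma inv_mem_colStab {σ : Perm (Fin n)} (hσ : σ ∈ colStab lam s) :
    σ⁻¹ ∈ colStab lam s := by
  rw [mem_colStab hs] at *
  intro x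
  conv_rhs => rw [← Perm.apply_inv_self σ x]
  rw [hσ]

lemma swap_mem_rowStab {a b : Fin n} (h : rowS hs a = rowS hs b) :
    Equiv.swap a b ∈ rowStab lam s := by
  rw [mem_rowStab hs]
  intro x
  rcases eq_or_ne x a with rfl | hxa
  · rw [Equiv.swap_apply_left, h]
  rcases eq_or_ne x b with rfl | hxb
  · rw [Equiv.swap_apply_right, h]
  · rw [Equiv.swap_apply_of_ne_of_ne hxa hxb]

lemma swap_mem_colStab {a b : Fin n} (h : colS hs a = colS hs b) :
    Equiv.swap a b ∈ colStab lam s := by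
  rw [mem_colStab hs]
  intro x
  rcases eq_or_ne x a with rfl | hxa
  · rw [Equiv.swap_apply_left, h]
  rcases eq_or_ne x b with rfl | hxb
  · rw [Equiv.swap_apply_right, h]
  · rw [Equiv.swap_apply_of_ne_of_ne hxa hxb]

lemma eq_one_of_mem_row_col {σ : Perm (Fin n)} (hr : σ ∈ rowStab lam s)
    (hc : σ ∈ colStab lam s) : σ = 1 := by
  rw [mem_rowStab hs] at hr
  rw [mem_colStab hs] at hc
  ext x
  exact congrArg (Fin.val) (eq_of_row_col hs (hr x) (hc x))


/-! ### Group algebra elements -/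

/-- The "signed column tabloid" `g·[C]`. -/
def ww (g : Perm (Fin n)) : MonoidAlgebra ℤ (Perm (Fin n)) :=
  MonoidAlgebra.single g 1 * altElt (colStab lam s)

/-- The polytabloid `g·{R}[C] = g·Y`. -/
def vv (g : Perm (Fin n)) : MonoidAlgebra ℤ (Perm (Fin n)) :=
  MonoidAlgebra.single g 1 * youngSym lam s

omit hs

lemma vv_eq_sum_ww (g : Perm (Fin n)) :
    vv (lam := lam) (s := s) g = ∑ ρ ∈ rowStab lam s, ww (lam := lam) (s := s) (g * ρ) := by
  rw [vv, youngSym, ← mul_assoc, sumElt, Finset.mul_sum, Finset.sum_mul]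
  refine Finset.sum_congr rfl fun ρ _ => ?_
  rw [ww, MonoidAlgebra.single_mul_single, mul_one]

lemma ww_expand (g : Perm (Fin n)) :
    ww (lam := lam) (s := s) g =
      ∑ c ∈ colStab lam s, MonoidAlgebra.single (g * c) ((Perm.sign c : ℤˣ) : ℤ) := by
  rw [ww, altElt, Finset.mul_sum]
  refine Finset.sum_congr rfl fun c _ => ?_
  rw [MonoidAlgebra.single_mul_single, one_mul]

lemma vv_expand (g : Perm (Fin n)) :
    vv (lam := lam) (s := s) g = ∑ ρ ∈ rowStab lam s, ∑ c ∈ colStab lam s,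
      MonoidAlgebra.single (g * ρ * c) ((Perm.sign c : ℤˣ) : ℤ) := by
  rw [vv_eq_sum_ww]
  exact Finset.sum_congr rfl fun ρ _ => ww_expand _

include hs

lemma single_mul_sumElt {ρ : Perm (Fin n)} (hρ : ρ ∈ rowStab lam s) :
    MonoidAlgebra.single ρ (1 : ℤ) * sumElt (rowStab lam s) = sumElt (rowStab lam s) := by
  rw [sumElt, Finset.mul_sum]
  rw [show ∑ σ ∈ rowStab lam s,
      MonoidAlgebra.single ρ (1:ℤ) * MonoidAlgebra.single σ 1
      = ∑ σ ∈ rowStab lam s, MonoidAlgebra.single (ρ * σ) (1:ℤ) from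
    Finset.sum_congr rfl fun σ _ => by rw [MonoidAlgebra.single_mul_single, one_mul]]
  refine Finset.sum_nbij' (fun σ => ρ * σ) (fun σ => ρ⁻¹ * σ) ?_ ?_ ?_ ?_ ?_
  · intro σ hσ; exact mul_mem_rowStab hs hρ hσ
  · intro σ hσ; exact mul_mem_rowStab hs (inv_mem_rowStab hs hρ) hσ
  · intro σ _; simp [mul_assoc]
  · intro σ _; simp [mul_assoc]
  · intro σ _; rfl

lemma vv_mul_rowStab {g ρ : Perm (Fin n)} (hρ : ρ ∈ rowStab lam s) :
    vv (lam := lam) (s := s) (g * ρ) = vv (lam := lam) (s := s) g := by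
  rw [vv, vv, youngSym, ← mul_assoc, ← mul_assoc]
  congr 1
  rw [show MonoidAlgebra.single (g * ρ) (1:ℤ)
      = MonoidAlgebra.single g 1 * MonoidAlgebra.single ρ 1 by
    rw [MonoidAlgebra.single_mul_single, one_mul]]
  rw [mul_assoc, single_mul_sumElt hs hρ]

lemma single_mul_altElt {δ : Perm (Fin n)} (hδ : δ ∈ colStab lam s) :
    MonoidAlgebra.single δ (1 : ℤ) * altElt (colStab lam s)
      = ((Perm.sign δ : ℤˣ) : ℤ) • altElt (colStab lam s) := by
  rw [altElt, Finset.mul_sum, Finset.smul_sum]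
  rw [show ∑ σ ∈ colStab lam s,
      MonoidAlgebra.single δ (1:ℤ) * MonoidAlgebra.single σ ((Perm.sign σ : ℤˣ) : ℤ)
      = ∑ σ ∈ colStab lam s, MonoidAlgebra.single (δ * σ) ((Perm.sign σ : ℤˣ) : ℤ) from
    Finset.sum_congr rfl fun σ _ => by rw [MonoidAlgebra.single_mul_single, one_mul]]
  refine Finset.sum_nbij' (fun σ => δ * σ) (fun σ => δ⁻¹ * σ) ?_ ?_ ?_ ?_ ?_
  · intro σ hσ; exact mul_mem_colStab hs hδ hσ
  · intro σ hσ; exact mul_mem_colStab hs (inv_mem_colStab hs hδ) hσ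
  · intro σ _; simp [mul_assoc]
  · intro σ _; simp [mul_assoc]
  · intro σ hσ
    have hsgn : ((Perm.sign (δ * σ) : ℤˣ) : ℤ) = ((Perm.sign δ : ℤˣ) : ℤ) * ((Perm.sign σ : ℤˣ) : ℤ) := by
      rw [map_mul]; push_cast; ring
    show MonoidAlgebra.single (δ * σ) ((Perm.sign σ : ℤˣ) : ℤ)
      = ((Perm.sign δ : ℤˣ) : ℤ) • MonoidAlgebra.single (δ * σ) ((Perm.sign (δ * σ) : ℤˣ) : ℤ)
    rw [show (((Perm.sign δ : ℤˣ) : ℤ) • MonoidAlgebra.single (δ * σ) ((Perm.sign (δ * σ) : ℤˣ) : ℤ) : MonoidAlgebra ℤ (Perm (Fin n)))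
      = MonoidAlgebra.single (δ * σ) (((Perm.sign δ : ℤˣ) : ℤ) * ((Perm.sign (δ*σ) : ℤˣ) : ℤ)) from MonoidAlgebra.smul_single' _ _ _]
    rw [hsgn]
    congr 1
    have h4 : ((Perm.sign δ : ℤˣ) : ℤ) * ((Perm.sign δ : ℤˣ) : ℤ) = 1 := by
      rcases Int.units_eq_one_or (Perm.sign δ) with h | h <;> rw [h] <;> norm_num
    rw [← mul_assoc, h4, one_mul]

lemma ww_mul_colStab {g δ : Perm (Fin n)} (hδ : δ ∈ colStab lam s) :
    ww (lam := lam) (s := s) (g * δ) = ((Perm.sign δ : ℤˣ) : ℤ) • ww (lam := lam) (s := s) g := by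
  rw [ww, ww]
  rw [show MonoidAlgebra.single (g * δ) (1:ℤ)
      = MonoidAlgebra.single g 1 * MonoidAlgebra.single δ 1 by
    rw [MonoidAlgebra.single_mul_single, one_mul]]
  rw [mul_assoc, single_mul_altElt hs hδ, mul_smul_comm]

/-- Swapping two values lying in the same column (of the tableau `h∘s`) negates `ww`. -/
lemma ww_swap {h : Perm (Fin n)} {a b : Fin n} (hab : a ≠ b)
    (hcol : colS hs (h⁻¹ a) = colS hs (h⁻¹ b)) :
    ww (lam := lam) (s := s) (Equiv.swap a b * h) = - ww (lam := lam) (s := s) h := by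
  have hδ : Equiv.swap (h⁻¹ a) (h⁻¹ b) ∈ colStab lam s := swap_mem_colStab hs hcol
  have hne : h⁻¹ a ≠ h⁻¹ b := fun hh => hab (by simpa using congrArg h hh)
  have key : Equiv.swap a b * h = h * Equiv.swap (h⁻¹ a) (h⁻¹ b) := by
    ext x
    simp only [Perm.mul_apply]
    rcases eq_or_ne x (h⁻¹ a) with rfl | hxa
    · simp [Equiv.swap_apply_left]
    rcases eq_or_ne x (h⁻¹ b) with rfl | hxb
    · simp [Equiv.swap_apply_right]
    · rw [Equiv.swap_apply_of_ne_of_ne hxa hxb,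
        Equiv.swap_apply_of_ne_of_ne (fun hh => hxa (by simp [← hh]))
          (fun hh => hxb (by simp [← hh]))]
  rw [key, ww_mul_colStab hs hδ, Perm.sign_swap hne]
  simp

/-- The product map `(ρ, c) ↦ g ρ c` is injective on `R × C`. -/
lemma rc_inj {g ρ ρ' c c' : Perm (Fin n)} (hρ : ρ ∈ rowStab lam s) (hρ' : ρ' ∈ rowStab lam s)
    (hc : c ∈ colStab lam s) (hc' : c' ∈ colStab lam s)
    (h : g * ρ * c = g * ρ' * c') : ρ = ρ' ∧ c = c' := by
  have this1 : ρ * c = ρ' * c' :=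
    mul_left_cancel ((mul_assoc g ρ c).symm.trans (h.trans (mul_assoc g ρ' c')))
  have hρeq2 : ρ = ρ' * c' * c⁻¹ := by
    rw [eq_mul_inv_iff_mul_eq]; exact this1
  have h1 : ρ'⁻¹ * ρ = c' * c⁻¹ := by rw [hρeq2]; group
  have hmr : ρ'⁻¹ * ρ ∈ rowStab lam s := mul_mem_rowStab hs (inv_mem_rowStab hs hρ') hρ
  have hmc : ρ'⁻¹ * ρ ∈ colStab lam s := by
    rw [h1]; exact mul_mem_colStab hs hc' (inv_mem_colStab hs hc)
  have h2 : ρ'⁻¹ * ρ = 1 := eq_one_of_mem_row_col hs hmr hmc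
  have hρeq : ρ = ρ' := by
    have := congrArg (ρ' * ·) h2; simpa [← mul_assoc] using this
  refine ⟨hρeq, ?_⟩
  subst hρeq
  exact mul_left_cancel (mul_left_cancel ((mul_assoc g ρ c).symm.trans (h.trans (mul_assoc g ρ c'))))

lemma vv_apply_self (g : Perm (Fin n)) : (vv (lam := lam) (s := s) g).coeff g = 1 := by
  rw [vv_expand]
  rw [MonoidAlgebra.coeff_sum, Finsupp.finset_sum_apply]
  rw [Finset.sum_eq_single (1 : Perm (Fin n))]
  · rw [MonoidAlgebra.coeff_sum, Finsupp.finset_sum_apply]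
    rw [Finset.sum_eq_single (1 : Perm (Fin n))]
    · simp [MonoidAlgebra.coeff_single, Finsupp.single_apply]
    · intro c hc hcne
      simp only [MonoidAlgebra.coeff_single, Finsupp.single_apply]
      rw [if_neg]
      intro hh
      exact hcne ((mul_left_cancel (a := g) (by simpa [mul_assoc] using hh)).symm)
    · intro h1; exact absurd (one_mem_colStab hs) h1
  · intro ρ hρ hρne
    rw [MonoidAlgebra.coeff_sum, Finsupp.finset_sum_apply]
    apply Finset.sum_eq_zero
    intro c hc
    simp only [MonoidAlgebra.coeff_single, Finsupp.single_apply]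
    rw [if_neg]
    intro hh
    have : g * ρ * c = g * 1 * 1 := by simpa using hh
    exact hρne (rc_inj hs hρ (one_mem_rowStab hs) hc (one_mem_colStab hs) this).1
  · intro h1; exact absurd (one_mem_rowStab hs) h1

omit hs
lemma vv_apply_eq_zero {g h : Perm (Fin n)}
    (hz : ∀ ρ ∈ rowStab lam s, ∀ c ∈ colStab lam s, g * ρ * c ≠ h) :
    (vv (lam := lam) (s := s) g).coeff h = 0 := by
  rw [vv_expand, MonoidAlgebra.coeff_sum, Finsupp.finset_sum_apply]
  apply Finset.sum_eq_zero
  intro ρ hρ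
  rw [MonoidAlgebra.coeff_sum, Finsupp.finset_sum_apply]
  apply Finset.sum_eq_zero
  intro c hc
  simp only [MonoidAlgebra.coeff_single, Finsupp.single_apply]
  rw [if_neg (hz ρ hρ c hc)]
include hs


/-! ### Measures and increasing conditions -/

/-- Row measure of the tableau `g ∘ s`. -/
def mr (g : Perm (Fin n)) : ℕ := ∑ x : Fin n, rowS hs (g⁻¹ x) * (x : ℕ)

/-- Column measure of the tableau `g ∘ s`. -/
def mc (g : Perm (Fin n)) : ℕ := ∑ x : Fin n, colS hs (g⁻¹ x) * (x : ℕ)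

/-- Rows of `g ∘ s` are increasing. -/
def RowInc (g : Perm (Fin n)) : Prop :=
  ∀ x y, rowS hs (g⁻¹ x) = rowS hs (g⁻¹ y) → colS hs (g⁻¹ x) < colS hs (g⁻¹ y) → x < y

/-- Columns of `g ∘ s` are increasing. -/
def ColInc (g : Perm (Fin n)) : Prop :=
  ∀ x y, colS hs (g⁻¹ x) = colS hs (g⁻¹ y) → rowS hs (g⁻¹ x) < rowS hs (g⁻¹ y) → x < y

omit hs
/-- A bound for both measures. -/
def BB (lam : YoungDiagram) (n : ℕ) : ℕ := n * (lam.card * n)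
include hs

lemma mr_le_BB (g : Perm (Fin n)) : mr hs g ≤ BB lam n := by
  calc mr hs g ≤ ∑ _x : Fin n, lam.card * n := by
        refine Finset.sum_le_sum fun x _ => ?_
        exact Nat.mul_le_mul (le_of_lt (rowS_lt hs _)) (le_of_lt x.isLt)
    _ = n * (lam.card * n) := by
        rw [Finset.sum_const, Finset.card_univ, Fintype.card_fin, smul_eq_mul]
  
lemma mc_le_BB (g : Perm (Fin n)) : mc hs g ≤ BB lam n := by
  calc mc hs g ≤ ∑ _x : Fin n, lam.card * n := by
        refine Finset.sum_le_sum fun x _ => ?_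
        exact Nat.mul_le_mul (le_of_lt (colS_lt hs _)) (le_of_lt x.isLt)
    _ = n * (lam.card * n) := by
        rw [Finset.sum_const, Finset.card_univ, Fintype.card_fin, smul_eq_mul]

lemma rowS_inv_mul {g ρ : Perm (Fin n)} (hρ : ρ ∈ rowStab lam s) (x : Fin n) :
    rowS hs ((g * ρ)⁻¹ x) = rowS hs (g⁻¹ x) := by
  rw [mul_inv_rev, Perm.mul_apply]
  exact (mem_rowStab hs).mp (inv_mem_rowStab hs hρ) (g⁻¹ x)

lemma colS_inv_mul {g c : Perm (Fin n)} (hc : c ∈ colStab lam s) (x : Fin n) :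
    colS hs ((g * c)⁻¹ x) = colS hs (g⁻¹ x) := by
  rw [mul_inv_rev, Perm.mul_apply]
  exact (mem_colStab hs).mp (inv_mem_colStab hs hc) (g⁻¹ x)

lemma mr_mul_rowStab {g ρ : Perm (Fin n)} (hρ : ρ ∈ rowStab lam s) :
    mr hs (g * ρ) = mr hs g :=
  Finset.sum_congr rfl fun x _ => by rw [rowS_inv_mul hs hρ]

lemma mc_mul_colStab {g c : Perm (Fin n)} (hc : c ∈ colStab lam s) :
    mc hs (g * c) = mc hs g :=
  Finset.sum_congr rfl fun x _ => by rw [colS_inv_mul hs hc]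

lemma mr_mul_left (σ g : Perm (Fin n)) :
    mr hs (σ * g) = ∑ y : Fin n, rowS hs (g⁻¹ y) * ((σ y : Fin n) : ℕ) := by
  rw [mr]
  refine (Fintype.sum_equiv σ _ _ fun y => ?_).symm
  rw [mul_inv_rev, Perm.mul_apply, Perm.inv_apply_self]

/-- Sort step: if the rows of `g∘s` are not increasing, one can multiply by an element
of the row stabilizer fixing `vv` and strictly increasing the column measure. -/
lemma sort_step {h : Perm (Fin n)} (hni : ¬ RowInc hs h) :
    ∃ ρ ∈ rowStab lam s,
      vv (lam := lam) (s := s) (h * ρ) = vv (lam := lam) (s := s) h ∧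
      mc hs h < mc hs (h * ρ) := by
  rw [RowInc] at hni
  push_neg at hni
  obtain ⟨x, y, hrow, hcol, hyx⟩ := hni
  have hxy : x ≠ y := fun hh => by rw [hh] at hcol; exact lt_irrefl _ hcol
  have hyx' : y < x := lt_of_le_of_ne hyx (fun hh => hxy hh.symm)
  have hρmem : h⁻¹ * Equiv.swap x y * h ∈ rowStab lam s := by
    have : h⁻¹ * Equiv.swap x y * h = Equiv.swap (h⁻¹ x) (h⁻¹ y) := by
      have := Equiv.swap_apply_apply h⁻¹ x y
      simpa using this.symm
    rw [this]
    exact swap_mem_rowStab hs hrow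
  refine ⟨h⁻¹ * Equiv.swap x y * h, hρmem, ?_, ?_⟩
  · exact vv_mul_rowStab hs hρmem
  · have hform : h * (h⁻¹ * Equiv.swap x y * h) = Equiv.swap x y * h := by group
    rw [hform]
    have hinv : ∀ z : Fin n, (Equiv.swap x y * h)⁻¹ z = h⁻¹ (Equiv.swap x y z) := by
      intro z
      simp [mul_inv_rev, Equiv.swap_inv]
    have hmc : mc hs (Equiv.swap x y * h) = ∑ z : Fin n, colS hs (h⁻¹ (Equiv.swap x y z)) * (z : ℕ) := by
      rw [mc]
      exact Finset.sum_congr rfl fun z _ => by rw [hinv]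
    rw [hmc, mc]
    -- split off x and y from both sums
    have hxmem : x ∈ (Finset.univ : Finset (Fin n)) := Finset.mem_univ x
    have hymem : y ∈ (Finset.univ : Finset (Fin n)).erase x :=
      Finset.mem_erase.mpr ⟨fun hh => hxy hh.symm, Finset.mem_univ y⟩
    have split : ∀ F : Fin n → ℕ, ∑ z : Fin n, F z
        = F x + (F y + ∑ z ∈ (Finset.univ.erase x).erase y, F z) := by
      intro F
      rw [Finset.add_sum_erase _ F hymem, Finset.add_sum_erase _ F hxmem]
    rw [split, split]
    have htail : ∑ z ∈ (Finset.univ.erase x).erase y, colS hs (h⁻¹ z) * (z:ℕ)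
        = ∑ z ∈ (Finset.univ.erase x).erase y, colS hs (h⁻¹ (Equiv.swap x y z)) * (z:ℕ) := by
      refine Finset.sum_congr rfl fun z hz => ?_
      rw [Finset.mem_erase, Finset.mem_erase] at hz
      rw [Equiv.swap_apply_of_ne_of_ne hz.2.1 hz.1]
    rw [← htail]
    have h1 : colS hs (h⁻¹ (Equiv.swap x y x)) = colS hs (h⁻¹ y) := by rw [Equiv.swap_apply_left]
    have h2 : colS hs (h⁻¹ (Equiv.swap x y y)) = colS hs (h⁻¹ x) := by rw [Equiv.swap_apply_right]
    rw [h1, h2]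
    have hkey : colS hs (h⁻¹ x) * (x:ℕ) + colS hs (h⁻¹ y) * (y:ℕ)
        < colS hs (h⁻¹ y) * (x:ℕ) + colS hs (h⁻¹ x) * (y:ℕ) := by
      have hy : (y:ℕ) < (x:ℕ) := hyx'
      set a := colS hs (h⁻¹ x)
      set b := colS hs (h⁻¹ y)
      zify
      nlinarith [hcol, hy]
    omega

/-- If columns are not increasing, there is an adjacent-row violation. -/
lemma exists_adj_violation {g : Perm (Fin n)} (hnc : ¬ ColInc hs g) :
    ∃ x y : Fin n, colS hs (g⁻¹ x) = colS hs (g⁻¹ y) ∧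
      rowS hs (g⁻¹ y) = rowS hs (g⁻¹ x) + 1 ∧ y < x := by
  rw [ColInc] at hnc
  push_neg at hnc
  obtain ⟨x, y, hcol, hrow, hyx⟩ := hnc
  have hxy : x ≠ y := fun hh => by rw [hh] at hrow; exact lt_irrefl _ hrow
  have hyx' : y < x := lt_of_le_of_ne hyx (fun hh => hxy hh.symm)
  obtain ⟨d, hd⟩ : ∃ d, rowS hs (g⁻¹ y) = rowS hs (g⁻¹ x) + d := ⟨_, (Nat.add_sub_cancel' (le_of_lt hrow)).symm⟩
  have hdpos : 0 < d := by omega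
  clear hrow hyx hxy
  induction d using Nat.strong_induction_on generalizing x y with
  | _ d ih =>
    rcases eq_or_ne d 1 with rfl | hd1
    · exact ⟨x, y, hcol, hd, hyx'⟩
    · have hd2 : 2 ≤ d := by omega
      -- intermediate cell
      have hymem : (rowS hs (g⁻¹ y), colS hs (g⁻¹ y)) ∈ lam := cell_mem hs _
      have hcell : (rowS hs (g⁻¹ x) + (d-1), colS hs (g⁻¹ y)) ∈ lam := by
        refine lam.up_left_mem ?_ le_rfl hymem
        omega
      set c : ↥lam.cells := ⟨(rowS hs (g⁻¹ x) + (d-1), colS hs (g⁻¹ y)), by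
        rwa [YoungDiagram.mem_cells]⟩ with hc
      set z : Fin n := g (s c) with hz
      have hzrow : rowS hs (g⁻¹ z) = rowS hs (g⁻¹ x) + (d-1) := by
        rw [hz, Perm.inv_apply_self, rowS_s]
      have hzcol : colS hs (g⁻¹ z) = colS hs (g⁻¹ y) := by
        rw [hz, Perm.inv_apply_self, colS_s]
      rcases lt_or_ge y z with hlt | hle
      · -- (z, y) is an adjacent violation
        refine ⟨z, y, ?_, ?_, hlt⟩
        · rw [hzcol]
        · rw [hzrow, hd]; omega
      · -- z < y < x, recurse on (x, z)
        have hzy : z ≠ y := by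
          intro hh
          rw [hh] at hzrow
          omega
        have hzlt : z < x := lt_of_le_of_ne (le_trans hle (le_of_lt hyx')) ?_
        · exact ih (d-1) (by omega) (x := x) (y := z) (by rw [hzcol, hcol]) hzlt hzrow (by omega)
        · intro hh
          rw [hh] at hzrow
          omega

lemma s_mk_eq {a b : ℕ} (hp : (a, b) ∈ lam.cells) {x : Fin n}
    (h1 : a = rowS hs x) (h2 : b = colS hs x) : s ⟨(a, b), hp⟩ = x := by
  subst h1; subst h2
  have hcc : (⟨(rowS hs x, colS hs x), hp⟩ : ↥lam.cells) = (ee hs).symm x :=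
    Subtype.ext (Prod.ext rfl rfl)
  rw [hcc, s_symm hs]

/-- For a row-increasing tableau, the column index of a value is determined by the rows
and the order. -/
lemma colS_det {g : Perm (Fin n)} (hri : RowInc hs g) (x : Fin n) :
    colS hs (g⁻¹ x) =
      (Finset.univ.filter (fun y => rowS hs (g⁻¹ y) = rowS hs (g⁻¹ x) ∧ y < x)).card := by
  have hxcell : (rowS hs (g⁻¹ x), colS hs (g⁻¹ x)) ∈ lam := cell_mem hs _
  rw [eq_comm, ← Finset.card_range (colS hs (g⁻¹ x))]
  refine Finset.card_bij' (i := fun y _ => colS hs (g⁻¹ y))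
    (j := fun l hl => g (s ⟨(rowS hs (g⁻¹ x), l), by
      rw [YoungDiagram.mem_cells]
      exact lam.up_left_mem le_rfl (le_of_lt (Finset.mem_range.mp hl)) hxcell⟩)) ?_ ?_ ?_ ?_
  · intro y hy
    rw [Finset.mem_filter] at hy
    obtain ⟨-, hrow, hlt⟩ := hy
    rw [Finset.mem_range]
    rcases lt_trichotomy (colS hs (g⁻¹ y)) (colS hs (g⁻¹ x)) with h | h | h
    · exact h
    · exfalso
      have heq : y = x := by
        have h5 := eq_of_row_col hs hrow h
        have h6 := congrArg g h5
        simpa using h6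
      exact absurd heq (ne_of_lt hlt)
    · exact absurd (hri x y hrow.symm h) (by omega)
  · intro l hl
    simp only [Finset.mem_filter, Finset.mem_univ, true_and]
    constructor
    · simp [Perm.inv_apply_self, rowS_s]
    · refine hri _ x ?_ ?_
      · simp [Perm.inv_apply_self, rowS_s]
      · simp only [Perm.inv_apply_self, colS_s]
        exact Finset.mem_range.mp hl
  · intro y hy
    rw [Finset.mem_filter] at hy
    show g (s ⟨(rowS hs (g⁻¹ x), colS hs (g⁻¹ y)), _⟩) = y
    rw [s_mk_eq hs _ hy.2.1.symm rfl]
    simp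
  · intro l hl
    simp [Perm.inv_apply_self, colS_s]

/-- For a column-increasing tableau, the row index of a value is determined by the columns
and the order. -/
lemma rowS_det {g : Perm (Fin n)} (hci : ColInc hs g) (x : Fin n) :
    rowS hs (g⁻¹ x) =
      (Finset.univ.filter (fun y => colS hs (g⁻¹ y) = colS hs (g⁻¹ x) ∧ y < x)).card := by
  have hxcell : (rowS hs (g⁻¹ x), colS hs (g⁻¹ x)) ∈ lam := cell_mem hs _
  rw [eq_comm, ← Finset.card_range (rowS hs (g⁻¹ x))]
  refine Finset.card_bij' (i := fun y _ => rowS hs (g⁻¹ y))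
    (j := fun l hl => g (s ⟨(l, colS hs (g⁻¹ x)), by
      rw [YoungDiagram.mem_cells]
      exact lam.up_left_mem (le_of_lt (Finset.mem_range.mp hl)) le_rfl hxcell⟩)) ?_ ?_ ?_ ?_
  · intro y hy
    rw [Finset.mem_filter] at hy
    obtain ⟨-, hcol, hlt⟩ := hy
    rw [Finset.mem_range]
    rcases lt_trichotomy (rowS hs (g⁻¹ y)) (rowS hs (g⁻¹ x)) with h | h | h
    · exact h
    · exfalso
      have heq : y = x := by
        have h5 := eq_of_row_col hs h hcol
        have h6 := congrArg g h5
        simpa using h6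
      exact absurd heq (ne_of_lt hlt)
    · exact absurd (hci x y hcol.symm h) (by omega)
  · intro l hl
    simp only [Finset.mem_filter, Finset.mem_univ, true_and]
    constructor
    · simp [Perm.inv_apply_self, colS_s]
    · refine hci _ x ?_ ?_
      · simp [Perm.inv_apply_self, colS_s]
      · simp only [Perm.inv_apply_self, rowS_s]
        exact Finset.mem_range.mp hl
  · intro y hy
    rw [Finset.mem_filter] at hy
    show g (s ⟨(rowS hs (g⁻¹ y), colS hs (g⁻¹ x)), _⟩) = y
    rw [s_mk_eq hs _ rfl hy.2.1.symm]
    simp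
  · intro l hl
    simp [Perm.inv_apply_self, rowS_s]

/-- Uniqueness of the row-increasing representative in a coset `g·R`. -/
lemma rowinc_unique {g ρ : Perm (Fin n)} (hρ : ρ ∈ rowStab lam s)
    (h1 : RowInc hs g) (h2 : RowInc hs (g * ρ)) : g * ρ = g := by
  have hrow : ∀ x, rowS hs ((g * ρ)⁻¹ x) = rowS hs (g⁻¹ x) := rowS_inv_mul hs hρ
  have hcol : ∀ x, colS hs ((g * ρ)⁻¹ x) = colS hs (g⁻¹ x) := by
    intro x
    rw [colS_det hs h2 x, colS_det hs h1 x]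
    congr 1
    refine Finset.filter_congr fun y _ => ?_
    rw [hrow, hrow]
  have : ∀ x, (g * ρ)⁻¹ x = g⁻¹ x := fun x => eq_of_row_col hs (hrow x) (hcol x)
  have hinv : (g * ρ)⁻¹ = g⁻¹ := Equiv.ext this
  exact inv_injective hinv

/-- Uniqueness of a standard tableau with given column sets. -/
lemma std_unique {g c : Perm (Fin n)} (hc : c ∈ colStab lam s)
    (h1r : RowInc hs g) (h1c : ColInc hs g)
    (h2r : RowInc hs (g * c)) (h2c : ColInc hs (g * c)) : g * c = g := by
  have hcol : ∀ x, colS hs ((g * c)⁻¹ x) = colS hs (g⁻¹ x) := colS_inv_mul hs hc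
  have hrow : ∀ x, rowS hs ((g * c)⁻¹ x) = rowS hs (g⁻¹ x) := by
    intro x
    rw [rowS_det hs h2c x, rowS_det hs h1c x]
    congr 1
    refine Finset.filter_congr fun y _ => ?_
    rw [hcol, hcol]
  have : ∀ x, (g * c)⁻¹ x = g⁻¹ x := fun x => eq_of_row_col hs (hrow x) (hcol x)
  exact inv_injective (Equiv.ext this)

/-- The column measure is strictly maximized at the row-increasing representative. -/
lemma mc_lt_of_mul {g : Perm (Fin n)} (hri : RowInc hs g) :
    ∀ ρ ∈ rowStab lam s, g * ρ ≠ g → mc hs (g * ρ) < mc hs g := by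
  suffices h : ∀ k : ℕ, ∀ ρ ∈ rowStab lam s, g * ρ ≠ g →
      BB lam n - mc hs (g * ρ) < k → mc hs (g * ρ) < mc hs g by
    intro ρ hρ hne
    exact h (BB lam n - mc hs (g * ρ) + 1) ρ hρ hne (by omega)
  intro k
  induction k with
  | zero => intro ρ _ _ hlt; omega
  | succ k ih =>
    intro ρ hρ hne hk
    have hnr : ¬ RowInc hs (g * ρ) := fun hr => hne (rowinc_unique hs hρ hri hr)
    obtain ⟨ρ₂, hρ₂, -, hmc⟩ := sort_step hs hnr
    rcases eq_or_ne (g * ρ * ρ₂) g with heq | hne2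
    · calc mc hs (g * ρ) < mc hs (g * ρ * ρ₂) := hmc
        _ = mc hs g := by rw [heq]
    · have hmem : ρ * ρ₂ ∈ rowStab lam s := mul_mem_rowStab hs hρ hρ₂
      have hltk : BB lam n - mc hs (g * (ρ * ρ₂)) < k := by
        have h1 : mc hs (g * ρ * ρ₂) ≤ BB lam n := mc_le_BB hs _
        have h2 : mc hs (g * (ρ * ρ₂)) = mc hs (g * ρ * ρ₂) := by rw [mul_assoc]
        omega
      have := ih (ρ * ρ₂) hmem (by rwa [← mul_assoc]) hltk
      calc mc hs (g * ρ) < mc hs (g * ρ * ρ₂) := hmc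
        _ = mc hs (g * (ρ * ρ₂)) := by rw [mul_assoc]
        _ < mc hs g := this


/-! ### Support subgroups and the Garnir relation -/

instance : NoZeroSMulDivisors ℤ (MonoidAlgebra ℤ (Perm (Fin n))) :=
  ⟨fun h => Module.isTorsionFree_iff_smul_eq_zero.mp inferInstance _ _ h⟩

omit hs

/-- Permutations supported inside `X`. -/
def SX (X : Finset (Fin n)) : Finset (Perm (Fin n)) :=
  Finset.univ.filter (fun σ => ∀ z ∉ X, σ z = z)

lemma mem_SX {X : Finset (Fin n)} {σ : Perm (Fin n)} :
    σ ∈ SX X ↔ ∀ z ∉ X, σ z = z := by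
  rw [SX, Finset.mem_filter]
  simp

lemma one_mem_SX {X : Finset (Fin n)} : (1 : Perm (Fin n)) ∈ SX X :=
  mem_SX.mpr fun z _ => rfl

lemma mul_mem_SX {X : Finset (Fin n)} {σ τ : Perm (Fin n)}
    (hσ : σ ∈ SX X) (hτ : τ ∈ SX X) : σ * τ ∈ SX X := by
  rw [mem_SX] at *
  intro z hz
  rw [Perm.mul_apply, hτ z hz, hσ z hz]

lemma inv_mem_SX {X : Finset (Fin n)} {σ : Perm (Fin n)} (hσ : σ ∈ SX X) :
    σ⁻¹ ∈ SX X := by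
  rw [mem_SX] at *
  intro z hz
  conv_lhs => rw [← hσ z hz]
  simp

lemma apply_mem_of_mem_SX {X : Finset (Fin n)} {σ : Perm (Fin n)} (hσ : σ ∈ SX X)
    {z : Fin n} (hz : z ∈ X) : σ z ∈ X := by
  by_contra hzz
  have h1 : σ (σ z) = σ z := (mem_SX.mp hσ) _ hzz
  have := σ.injective h1
  rw [this] at hzz
  exact hzz hz

lemma swap_mem_SX {X : Finset (Fin n)} {a b : Fin n} (ha : a ∈ X) (hb : b ∈ X) :
    Equiv.swap a b ∈ SX X := by
  rw [mem_SX]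
  intro z hz
  exact Equiv.swap_apply_of_ne_of_ne (fun h => hz (h ▸ ha)) (fun h => hz (h ▸ hb))

lemma image_eq_of_mem_SX {X : Finset (Fin n)} {σ : Perm (Fin n)} (hσ : σ ∈ SX X) :
    X.image σ = X := by
  apply Finset.eq_of_subset_of_card_le
  · intro z hz
    rw [Finset.mem_image] at hz
    obtain ⟨w, hw, rfl⟩ := hz
    exact apply_mem_of_mem_SX hσ hw
  · rw [Finset.card_image_of_injective _ σ.injective]

include hs


omit hs
lemma image_mul (σ τ : Perm (Fin n)) (A : Finset (Fin n)) :
    A.image ⇑(σ * τ) = (A.image ⇑τ).image ⇑σ := by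
  rw [Finset.image_image]
  rfl

lemma image_inv_image (σ : Perm (Fin n)) (A : Finset (Fin n)) :
    (A.image ⇑σ).image ⇑σ⁻¹ = A := by
  rw [Finset.image_image]
  have : (⇑σ⁻¹ ∘ ⇑σ) = id := by funext w; simp
  rw [this, Finset.image_id]
include hs


omit hs
lemma sum_lt_sum_sep {sF tF : Finset (Fin n)} (hcard : sF.card = tF.card)
    (hne : tF.Nonempty) (hsep : ∀ p ∈ sF, ∀ q ∈ tF, p < q) :
    (∑ z ∈ sF, (z : ℕ)) < ∑ z ∈ tF, (z : ℕ) := by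
  obtain ⟨q0, hq0⟩ := hne
  haveI : Nonempty {x // x ∈ tF} := ⟨⟨q0, hq0⟩⟩
  have e := Finset.equivOfCardEq hcard
  have h1 : ∑ z ∈ sF, (z : ℕ) = ∑ q : {x // x ∈ tF}, ((e.symm q : Fin n) : ℕ) := by
    rw [← Finset.sum_coe_sort sF (fun z => (z : ℕ))]
    exact (Equiv.sum_comp e.symm (fun p : {x // x ∈ sF} => ((p : Fin n) : ℕ))).symm
  have h2 : ∑ z ∈ tF, (z : ℕ) = ∑ q : {x // x ∈ tF}, ((q : Fin n) : ℕ) :=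
    (Finset.sum_coe_sort tF (fun z => (z : ℕ))).symm
  rw [h1, h2]
  refine Finset.sum_lt_sum_of_nonempty Finset.univ_nonempty (fun q _ => ?_)
  exact hsep _ (e.symm q).2 _ q.2

lemma topheavy {A B F : Finset (Fin n)} (hsep : ∀ a ∈ A, ∀ b ∈ B, b < a)
    (hF : F ⊆ A ∪ B) (hcard : F.card = A.card) (hne : F ≠ A) :
    (∑ z ∈ F, (z : ℕ)) < ∑ z ∈ A, (z : ℕ) := by
  have h1 : ∑ z ∈ F ∩ A, (z : ℕ) + ∑ z ∈ F \ A, (z : ℕ) = ∑ z ∈ F, (z : ℕ) :=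
    Finset.sum_inter_add_sum_sdiff F A _
  have h2 : ∑ z ∈ A ∩ F, (z : ℕ) + ∑ z ∈ A \ F, (z : ℕ) = ∑ z ∈ A, (z : ℕ) :=
    Finset.sum_inter_add_sum_sdiff A F _
  have hAF : (A \ F).Nonempty := by
    rw [Finset.sdiff_nonempty]
    intro hsub
    exact hne (Finset.eq_of_subset_of_card_le hsub (le_of_eq hcard)).symm
  have hcards : (F \ A).card = (A \ F).card := by
    have c1 : (F \ A).card + (F ∩ A).card = F.card := Finset.card_sdiff_add_card_inter F A
    have c2 : (A \ F).card + (A ∩ F).card = A.card := Finset.card_sdiff_add_card_inter A F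
    rw [Finset.inter_comm A F] at c2
    omega
  have hFB : ∀ p ∈ F \ A, ∀ q ∈ A \ F, p < q := by
    intro p hp q hq
    rw [Finset.mem_sdiff] at hp hq
    have hpB : p ∈ B := by
      have := hF hp.1
      rw [Finset.mem_union] at this
      tauto
    exact hsep q hq.1 p hpB
  have hlt := sum_lt_sum_sep hcards hAF hFB
  have hinter : ∑ z ∈ F ∩ A, (z : ℕ) = ∑ z ∈ A ∩ F, (z : ℕ) := by rw [Finset.inter_comm]
  omega
include hs

/-- Cancellation: if two elements of `X` lie in the same column of `u∘s`, the signed sum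
over the support group vanishes. -/
lemma cancel_inner {u : Perm (Fin n)} {X : Finset (Fin n)} {a b : Fin n}
    (ha : a ∈ X) (hb : b ∈ X) (hab : a ≠ b)
    (hcol : colS hs (u⁻¹ a) = colS hs (u⁻¹ b)) :
    ∑ σ ∈ SX X, ww (lam := lam) (s := s) (σ * u) = 0 := by
  refine Finset.sum_involution (fun σ _ => Equiv.swap (σ a) (σ b) * σ) ?_ ?_ ?_ ?_
  · intro σ hσ
    have h1 : Equiv.swap (σ a) (σ b) * σ * u = Equiv.swap (σ a) (σ b) * (σ * u) := by
      rw [mul_assoc]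
    rw [h1, ww_swap hs (fun h => hab (σ.injective h)) ?_]
    · exact add_neg_cancel _
    · have h2 : (σ * u)⁻¹ (σ a) = u⁻¹ a := by
        rw [mul_inv_rev, Perm.mul_apply, Perm.inv_apply_self]
      have h3 : (σ * u)⁻¹ (σ b) = u⁻¹ b := by
        rw [mul_inv_rev, Perm.mul_apply, Perm.inv_apply_self]
      rw [h2, h3]
      exact hcol
  · intro σ hσ _
    intro heq
    have h1 : Equiv.swap (σ a) (σ b) = 1 := by
      have := congrArg (· * σ⁻¹) heq
      simpa [mul_assoc] using this
    have h2 : σ b = σ a := by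
      have := congrArg (fun p => p (σ a)) h1
      simpa [Equiv.swap_apply_left] using this
    exact hab (σ.injective h2.symm)
  · intro σ hσ
    exact mul_mem_SX (swap_mem_SX (apply_mem_of_mem_SX hσ ha) (apply_mem_of_mem_SX hσ hb)) hσ
  · intro σ hσ
    show Equiv.swap ((Equiv.swap (σ a) (σ b) * σ) a) ((Equiv.swap (σ a) (σ b) * σ) b)
        * (Equiv.swap (σ a) (σ b) * σ) = σ
    have h1 : (Equiv.swap (σ a) (σ b) * σ) a = σ b := by
      rw [Perm.mul_apply, Equiv.swap_apply_left]
    have h2 : (Equiv.swap (σ a) (σ b) * σ) b = σ a := by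
      rw [Perm.mul_apply, Equiv.swap_apply_right]
    rw [h1, h2, Equiv.swap_comm]
    rw [← mul_assoc, Equiv.swap_mul_self, one_mul]

lemma conj_mem_rowStab {g τ : Perm (Fin n)}
    (h : ∀ z, rowS hs (g⁻¹ (τ z)) = rowS hs (g⁻¹ z)) :
    g⁻¹ * τ * g ∈ rowStab lam s := by
  rw [mem_rowStab hs]
  intro w
  have := h (g w)
  simpa using this

/-- The Garnir relation: a polytabloid of a row-increasing tableau with a column violation
is an (integral) linear combination of polytabloids with strictly bigger row measure. -/
lemma garnir {g : Perm (Fin n)} (hri : RowInc hs g)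
    {x y : Fin n} (hcol : colS hs (g⁻¹ x) = colS hs (g⁻¹ y))
    (hrow : rowS hs (g⁻¹ y) = rowS hs (g⁻¹ x) + 1) (hyx : y < x) :
    ∃ T : Finset (Perm (Fin n)),
      (∀ σ ∈ T, mr hs g < mr hs (σ * g)) ∧
      vv (lam := lam) (s := s) g = - ∑ σ ∈ T, vv (lam := lam) (s := s) (σ * g) := by
  classical
  set i := rowS hs (g⁻¹ x) with hi
  set j := colS hs (g⁻¹ x) with hj
  set A : Finset (Fin n) :=
    (lam.cells.attach.filter (fun c => c.val.1 = i ∧ j ≤ c.val.2)).image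
      (fun c => g (s c)) with hA
  set B : Finset (Fin n) :=
    (lam.cells.attach.filter (fun c => c.val.1 = i + 1 ∧ c.val.2 ≤ j)).image
      (fun c => g (s c)) with hB
  set X := A ∪ B with hX
  have memA : ∀ a : Fin n, a ∈ A ↔ (rowS hs (g⁻¹ a) = i ∧ j ≤ colS hs (g⁻¹ a)) := by
    intro a
    rw [hA, Finset.mem_image]
    constructor
    · rintro ⟨c, hc, rfl⟩
      rw [Finset.mem_filter] at hc
      rw [Perm.inv_apply_self, rowS_s, colS_s]
      exact hc.2
    · rintro ⟨h1, h2⟩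
      refine ⟨(ee hs).symm (g⁻¹ a), ?_, ?_⟩
      · rw [Finset.mem_filter]
        exact ⟨Finset.mem_attach _ _, h1, h2⟩
      · rw [s_symm hs]
        simp
  have memB : ∀ b : Fin n, b ∈ B ↔ (rowS hs (g⁻¹ b) = i + 1 ∧ colS hs (g⁻¹ b) ≤ j) := by
    intro b
    rw [hB, Finset.mem_image]
    constructor
    · rintro ⟨c, hc, rfl⟩
      rw [Finset.mem_filter] at hc
      rw [Perm.inv_apply_self, rowS_s, colS_s]
      exact hc.2
    · rintro ⟨h1, h2⟩
      refine ⟨(ee hs).symm (g⁻¹ b), ?_, ?_⟩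
      · rw [Finset.mem_filter]
        exact ⟨Finset.mem_attach _ _, h1, h2⟩
      · rw [s_symm hs]
        simp
  have hxA : x ∈ A := (memA x).mpr ⟨rfl, le_rfl⟩
  have hyB : y ∈ B := (memB y).mpr ⟨hrow, le_of_eq hcol.symm⟩
  have hdisj : Disjoint A B := by
    rw [Finset.disjoint_left]
    intro z hzA hzB
    have h1 := ((memA z).mp hzA).1
    have h2 := ((memB z).mp hzB).1
    omega
  have hAB : ∀ a ∈ A, ∀ b ∈ B, b < a := by
    intro a haA b hbB
    obtain ⟨ha1, ha2⟩ := (memA a).mp haA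
    obtain ⟨hb1, hb2⟩ := (memB b).mp hbB
    have hxa : x ≤ a := by
      rcases eq_or_lt_of_le ha2 with heq | hlt
      · have : g⁻¹ a = g⁻¹ x := eq_of_row_col hs (by rw [ha1]) (by rw [← heq])
        have : a = x := by
          have := congrArg g this
          simpa using this
        omega
      · exact le_of_lt (hri x a (by rw [ha1]) hlt)
    have hby : b ≤ y := by
      have hycol : colS hs (g⁻¹ y) = j := hcol.symm
      rcases eq_or_lt_of_le hb2 with heq | hlt
      · have : g⁻¹ b = g⁻¹ y := eq_of_row_col hs (by rw [hb1, hrow]) (by rw [heq, hycol])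
        have : b = y := by
          have := congrArg g this
          simpa using this
        omega
      · refine le_of_lt (hri b y (by rw [hb1, hrow]) ?_)
        rw [hycol]
        exact hlt
    calc b ≤ y := hby
      _ < x := hyx
      _ ≤ a := hxa
  -- cardinalities
  have hjlt : j < lam.rowLen i := by
    rw [← YoungDiagram.mem_iff_lt_rowLen]
    exact cell_mem hs (g⁻¹ x)
  have hcardA : A.card = lam.rowLen i - j := by
    rw [hA, Finset.card_image_of_injective _ (fun c c' hcc => hs.injective (g.injective hcc))]
    rw [← Nat.card_Ico j (lam.rowLen i)]
    refine Finset.card_bij' (i := fun c _ => c.val.2)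
      (j := fun l hl => ⟨(i, l), by
        rw [YoungDiagram.mem_cells, YoungDiagram.mem_iff_lt_rowLen]
        exact (Finset.mem_Ico.mp hl).2⟩) ?_ ?_ ?_ ?_
    · intro c hc
      rw [Finset.mem_filter] at hc
      show c.val.2 ∈ Finset.Ico j (lam.rowLen i)
      rw [Finset.mem_Ico]
      refine ⟨hc.2.2, ?_⟩
      have hcell : (c.val.1, c.val.2) ∈ lam := by
        have := c.prop
        rw [YoungDiagram.mem_cells] at this
        simpa using this
      rw [hc.2.1] at hcell
      exact YoungDiagram.mem_iff_lt_rowLen.mp hcell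
    · intro l hl
      rw [Finset.mem_filter]
      exact ⟨Finset.mem_attach _ _, rfl, (Finset.mem_Ico.mp hl).1⟩
    · intro c hc
      rw [Finset.mem_filter] at hc
      show (⟨(i, c.val.2), _⟩ : ↥lam.cells) = c
      refine Subtype.ext ?_
      show (i, c.val.2) = c.val
      rw [← hc.2.1]
    · intro l hl
      rfl
  have hylam : (i + 1, j) ∈ lam := by
    have := cell_mem hs (g⁻¹ y)
    rwa [hrow, hcol.symm] at this
  have hcardB : B.card = j + 1 := by
    rw [hB, Finset.card_image_of_injective _ (fun c c' hcc => hs.injective (g.injective hcc))]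
    rw [← Finset.card_range (j + 1)]
    refine Finset.card_bij' (i := fun c _ => c.val.2)
      (j := fun l hl => ⟨(i + 1, l), by
        rw [YoungDiagram.mem_cells]
        exact lam.up_left_mem le_rfl (Nat.lt_succ_iff.mp (Finset.mem_range.mp hl)) hylam⟩)
      ?_ ?_ ?_ ?_
    · intro c hc
      rw [Finset.mem_filter] at hc
      show c.val.2 ∈ Finset.range (j + 1)
      rw [Finset.mem_range]
      omega
    · intro l hl
      rw [Finset.mem_filter]
      exact ⟨Finset.mem_attach _ _, rfl, Nat.lt_succ_iff.mp (Finset.mem_range.mp hl)⟩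
    · intro c hc
      rw [Finset.mem_filter] at hc
      show (⟨(i + 1, c.val.2), _⟩ : ↥lam.cells) = c
      refine Subtype.ext ?_
      show (i + 1, c.val.2) = c.val
      rw [← hc.2.1]
    · intro l hl
      rfl
  have hcardX : X.card = lam.rowLen i + 1 := by
    rw [hX, Finset.card_union_of_disjoint hdisj, hcardA, hcardB]
    omega
  -- pigeonhole for each u = g * ρ
  have pigeon : ∀ ρ ∈ rowStab lam s, ∃ a ∈ X, ∃ b ∈ X, a ≠ b ∧
      colS hs ((g * ρ)⁻¹ a) = colS hs ((g * ρ)⁻¹ b) := by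
    intro ρ hρ
    have hmaps : ∀ z ∈ X, colS hs ((g * ρ)⁻¹ z) ∈ Finset.range (lam.rowLen i) := by
      intro z hz
      rw [Finset.mem_range]
      have hrz : rowS hs ((g * ρ)⁻¹ z) = rowS hs (g⁻¹ z) := rowS_inv_mul hs hρ z
      have hzi : i ≤ rowS hs ((g * ρ)⁻¹ z) := by
        rw [hrz]
        rw [hX, Finset.mem_union] at hz
        rcases hz with hz | hz
        · rw [((memA z).mp hz).1]
        · rw [((memB z).mp hz).1]; omega
      have hcell := cell_mem hs ((g * ρ)⁻¹ z)
      rw [YoungDiagram.mem_iff_lt_rowLen] at hcell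
      calc colS hs ((g * ρ)⁻¹ z) < lam.rowLen (rowS hs ((g * ρ)⁻¹ z)) := hcell
        _ ≤ lam.rowLen i := lam.rowLen_anti _ _ hzi
    have hcard : (Finset.range (lam.rowLen i)).card < X.card := by
      rw [Finset.card_range, hcardX]
      omega
    obtain ⟨a, ha, b, hb, hab, heq⟩ := Finset.exists_ne_map_eq_of_card_lt_of_maps_to hcard hmaps
    exact ⟨a, ha, b, hb, hab, heq⟩
  -- the big cancellation
  have cancel : ∑ σ ∈ SX X, vv (lam := lam) (s := s) (σ * g) = 0 := by
    have step1 : ∀ σ : Perm (Fin n), vv (lam := lam) (s := s) (σ * g)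
        = ∑ ρ ∈ rowStab lam s, ww (lam := lam) (s := s) (σ * (g * ρ)) := by
      intro σ
      rw [vv_eq_sum_ww]
      exact Finset.sum_congr rfl fun ρ _ => by rw [mul_assoc]
    calc ∑ σ ∈ SX X, vv (lam := lam) (s := s) (σ * g)
        = ∑ σ ∈ SX X, ∑ ρ ∈ rowStab lam s, ww (lam := lam) (s := s) (σ * (g * ρ)) :=
          Finset.sum_congr rfl fun σ _ => step1 σ
      _ = ∑ ρ ∈ rowStab lam s, ∑ σ ∈ SX X, ww (lam := lam) (s := s) (σ * (g * ρ)) :=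
          Finset.sum_comm
      _ = 0 := by
          refine Finset.sum_eq_zero fun ρ hρ => ?_
          obtain ⟨a, ha, b, hb, hab, heq⟩ := pigeon ρ hρ
          exact cancel_inner hs ha hb hab heq
  -- fiberwise grouping over images of A
  set Phi : Perm (Fin n) → Finset (Fin n) := fun σ => A.image σ with hPhi
  set H : Finset (Perm (Fin n)) := (SX X).filter (fun σ => Phi σ = A) with hH
  have hsub : A ⊆ X := Finset.subset_union_left
  have fib_const : ∀ σ ∈ SX X, ∀ σ' ∈ SX X, Phi σ = Phi σ' →
      vv (lam := lam) (s := s) (σ * g) = vv (lam := lam) (s := s) (σ' * g) := by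
    intro σ hσ σ' hσ' hpp
    set τ : Perm (Fin n) := σ'⁻¹ * σ with hτ
    have hτmem : τ ∈ SX X := mul_mem_SX (inv_mem_SX hσ') hσ
    have hpp' : A.image ⇑σ = A.image ⇑σ' := hpp
    have hτA : A.image ⇑τ = A := by
      rw [hτ, image_mul, hpp']
      exact image_inv_image σ' A
    have hτrows : ∀ z, rowS hs (g⁻¹ (τ z)) = rowS hs (g⁻¹ z) := by
      intro z
      by_cases hz : z ∈ X
      · have hτz : τ z ∈ X := apply_mem_of_mem_SX hτmem hz
        by_cases hzA : z ∈ A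
        · have : τ z ∈ A := by
            rw [← hτA]
            exact Finset.mem_image_of_mem _ hzA
          rw [((memA _).mp this).1, ((memA _).mp hzA).1]
        · have hzB : z ∈ B := by
            rw [hX, Finset.mem_union] at hz
            tauto
          have hτzB : τ z ∈ B := by
            have hτzX := hτz
            rw [hX, Finset.mem_union] at hτzX
            rcases hτzX with hh | hh
            · exfalso
              rw [← hτA, Finset.mem_image] at hh
              obtain ⟨w, hw, hww⟩ := hh
              have := τ.injective hww
              rw [← this] at hzA
              exact hzA hw
            · exact hh
          rw [((memB _).mp hτzB).1, ((memB _).mp hzB).1]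
      · rw [(mem_SX.mp hτmem) z hz]
    have hconj : g⁻¹ * τ * g ∈ rowStab lam s := conj_mem_rowStab hs hτrows
    have hform : σ * g = (σ' * g) * (g⁻¹ * τ * g) := by
      rw [hτ]; group
    rw [hform, vv_mul_rowStab hs hconj]
  have fib_card : ∀ A' : Finset (Fin n), ∀ σ₀ ∈ (SX X).filter (fun σ => Phi σ = A'),
      ((SX X).filter (fun σ => Phi σ = A')).card = H.card := by
    intro A' σ₀ hσ₀
    rw [Finset.mem_filter] at hσ₀
    rw [eq_comm]
    refine Finset.card_bij' (i := fun h _ => σ₀ * h) (j := fun σ _ => σ₀⁻¹ * σ) ?_ ?_ ?_ ?_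
    · intro h hh
      rw [hH, Finset.mem_filter] at hh
      rw [Finset.mem_filter]
      refine ⟨mul_mem_SX hσ₀.1 hh.1, ?_⟩
      show A.image ⇑(σ₀ * h) = A'
      rw [image_mul]
      have hhA : A.image ⇑h = A := hh.2
      rw [hhA]
      exact hσ₀.2
    · intro σ hσ
      rw [Finset.mem_filter] at hσ
      rw [hH, Finset.mem_filter]
      refine ⟨mul_mem_SX (inv_mem_SX hσ₀.1) hσ.1, ?_⟩
      have hs2 : A.image ⇑σ = A' := hσ.2
      have hs02 : A.image ⇑σ₀ = A' := hσ₀.2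
      show A.image ⇑(σ₀⁻¹ * σ) = A
      rw [image_mul, hs2, ← hs02]
      exact image_inv_image σ₀ A
    · intro h _
      group
    · intro σ _
      group
  -- measure increase for any support permutation moving A
  have measure : ∀ σ ∈ SX X, A.image ⇑σ ≠ A → mr hs g < mr hs (σ * g) := by
    intro σ hσ hneA
    have himg : X.image ⇑σ = X := image_eq_of_mem_SX hσ
    set SA : ℤ := ∑ z ∈ A, ((σ z : Fin n) : ℕ) with hSA
    set TA : ℤ := ∑ z ∈ A, ((z : ℕ) : ℤ) with hTA
    set SB : ℤ := ∑ z ∈ B, ((σ z : Fin n) : ℕ) with hSB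
    set TB : ℤ := ∑ z ∈ B, ((z : ℕ) : ℤ) with hTB
    have f1 : SA + SB = TA + TB := by
      have hXsum : ∑ z ∈ X, (((σ z : Fin n) : ℕ) : ℤ) = ∑ z ∈ X, ((z : ℕ) : ℤ) := by
        have h5 := Finset.sum_image (s := X) (g := ⇑σ) (f := fun z : Fin n => ((z : ℕ) : ℤ))
          (fun z _ w _ hzw => σ.injective hzw)
        rw [himg] at h5
        exact h5.symm
      rw [hSA, hSB, hTA, hTB]
      rw [← Finset.sum_union hdisj, ← Finset.sum_union hdisj, ← hX]
      push_cast
      exact_mod_cast hXsum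
    have f2 : SA < TA := by
      have himgA : A.image ⇑σ ⊆ X := by
        rw [← himg]
        exact Finset.image_subset_image hsub
      have htop := topheavy hAB himgA
        (by rw [Finset.card_image_of_injective _ σ.injective]) hneA
      have hSA' : SA = ∑ z ∈ A.image ⇑σ, ((z : ℕ) : ℤ) := by
        rw [hSA]
        exact (Finset.sum_image (s := A) (g := ⇑σ) (f := fun z : Fin n => ((z : ℕ) : ℤ))
          (fun z _ w _ hzw => σ.injective hzw)).symm
      rw [hSA'] at *
      rw [hTA]
      exact_mod_cast htop
    -- compute the difference of measures
    have hdiff : (mr hs (σ * g) : ℤ) - (mr hs g : ℤ)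
        = ∑ z ∈ X, ((rowS hs (g⁻¹ z) : ℤ) * ((((σ z : Fin n) : ℕ) : ℤ) - ((z : ℕ) : ℤ))) := by
      have hm1 : (mr hs (σ * g) : ℤ) = ∑ z : Fin n, ((rowS hs (g⁻¹ z) : ℤ) * (((σ z : Fin n) : ℕ) : ℤ)) := by
        rw [mr_mul_left hs]
        push_cast
        rfl
      have hm2 : (mr hs g : ℤ) = ∑ z : Fin n, ((rowS hs (g⁻¹ z) : ℤ) * ((z : ℕ) : ℤ)) := by
        rw [mr]
        push_cast
        rfl
      rw [hm1, hm2, ← Finset.sum_sub_distrib]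
      rw [← Finset.sum_subset (Finset.subset_univ X) ?_]
      · exact Finset.sum_congr rfl fun z _ => by ring
      · intro z _ hz
        rw [(mem_SX.mp hσ) z hz]
        ring
    have hdA : ∑ z ∈ A, ((rowS hs (g⁻¹ z) : ℤ) * ((((σ z : Fin n) : ℕ) : ℤ) - ((z : ℕ) : ℤ)))
        = (i : ℤ) * (SA - TA) := by
      rw [hSA, hTA, ← Finset.sum_sub_distrib, Finset.mul_sum]
      refine Finset.sum_congr rfl fun z hz => ?_
      rw [((memA z).mp hz).1]
    have hdB : ∑ z ∈ B, ((rowS hs (g⁻¹ z) : ℤ) * ((((σ z : Fin n) : ℕ) : ℤ) - ((z : ℕ) : ℤ)))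
        = ((i : ℤ) + 1) * (SB - TB) := by
      rw [hSB, hTB, ← Finset.sum_sub_distrib, Finset.mul_sum]
      refine Finset.sum_congr rfl fun z hz => ?_
      rw [((memB z).mp hz).1]
      push_cast
      ring
    have hdiff2 : (mr hs (σ * g) : ℤ) - (mr hs g : ℤ) = TA - SA := by
      rw [hdiff, hX, Finset.sum_union hdisj, hdA, hdB]
      have : SB - TB = TA - SA := by linarith
      rw [this]
      ring
    have : (mr hs g : ℤ) < (mr hs (σ * g) : ℤ) := by linarith
    exact_mod_cast this
  -- choose representatives of the fibers
  classical
  set total : Finset (Finset (Fin n)) := (SX X).image Phi with htotal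
  set pick : Finset (Fin n) → Perm (Fin n) := fun A' =>
    if hne : ((SX X).filter (fun σ => Phi σ = A')).Nonempty then hne.choose else 1 with hpickdef
  have pick_mem : ∀ A' ∈ total, pick A' ∈ (SX X).filter (fun σ => Phi σ = A') := by
    intro A' hA'
    rw [htotal, Finset.mem_image] at hA'
    obtain ⟨σ, hσ, hσA⟩ := hA'
    have hne : ((SX X).filter (fun σ => Phi σ = A')).Nonempty :=
      ⟨σ, Finset.mem_filter.mpr ⟨hσ, hσA⟩⟩
    show (if hne : ((SX X).filter (fun σ => Phi σ = A')).Nonempty then hne.choose else 1)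
        ∈ (SX X).filter (fun σ => Phi σ = A')
    rw [dif_pos hne]
    exact hne.choose_spec
  have fiber_sum : ∀ A' ∈ total, ∑ σ ∈ (SX X).filter (fun σ => Phi σ = A'),
      vv (lam := lam) (s := s) (σ * g) = H.card • vv (lam := lam) (s := s) (pick A' * g) := by
    intro A' hA'
    have hp := pick_mem A' hA'
    have hcardeq := fib_card A' (pick A') hp
    rw [Finset.mem_filter] at hp
    rw [show ∑ σ ∈ (SX X).filter (fun σ => Phi σ = A'), vv (lam := lam) (s := s) (σ * g)
        = ∑ _σ ∈ (SX X).filter (fun σ => Phi σ = A'), vv (lam := lam) (s := s) (pick A' * g) from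
      Finset.sum_congr rfl fun σ hσ => by
        rw [Finset.mem_filter] at hσ
        exact fib_const σ hσ.1 (pick A') hp.1 (hσ.2.trans hp.2.symm)]
    rw [Finset.sum_const, hcardeq]
  have main0 : ∑ A' ∈ total, (H.card • vv (lam := lam) (s := s) (pick A' * g)) = 0 := by
    have h0 : ∑ A' ∈ total, ∑ σ ∈ (SX X).filter (fun σ => Phi σ = A'),
        vv (lam := lam) (s := s) (σ * g) = 0 := by
      rw [Finset.sum_fiberwise_of_maps_to (fun σ hσ => Finset.mem_image_of_mem Phi hσ)]
      exact cancel
    rw [← h0]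
    exact (Finset.sum_congr rfl fun A' hA' => (fiber_sum A' hA')).symm
  have hHne : H.card ≠ 0 := by
    have : (1 : Perm (Fin n)) ∈ H := by
      rw [hH, Finset.mem_filter]
      refine ⟨one_mem_SX, ?_⟩
      show A.image ⇑(1 : Perm (Fin n)) = A
      simp
    intro hc
    rw [Finset.card_eq_zero] at hc
    rw [hc] at this
    exact absurd this (Finset.notMem_empty _)
  have main1 : ∑ A' ∈ total, vv (lam := lam) (s := s) (pick A' * g) = 0 := by
    rw [← Finset.smul_sum] at main0
    have : ((H.card : ℤ)) • (∑ A' ∈ total, vv (lam := lam) (s := s) (pick A' * g)) = 0 := by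
      rw [natCast_zsmul]
      exact main0
    rcases smul_eq_zero.mp this with h | h
    · exact absurd (by exact_mod_cast h) hHne
    · exact h
  have hAmem : A ∈ total := by
    rw [htotal, Finset.mem_image]
    refine ⟨1, one_mem_SX, ?_⟩
    show A.image ⇑(1 : Perm (Fin n)) = A
    simp
  have hpickA : vv (lam := lam) (s := s) (pick A * g) = vv (lam := lam) (s := s) g := by
    have hp := pick_mem A hAmem
    rw [Finset.mem_filter] at hp
    have h1A : Phi (1 : Perm (Fin n)) = A := by
      show A.image ⇑(1 : Perm (Fin n)) = A
      simp
    have := fib_const (pick A) hp.1 1 one_mem_SX (hp.2.trans h1A.symm)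
    simpa using this
  refine ⟨(total.erase A).image pick, ?_, ?_⟩
  · intro σ hσ
    rw [Finset.mem_image] at hσ
    obtain ⟨A', hA', rfl⟩ := hσ
    have hA'tot : A' ∈ total := Finset.mem_of_mem_erase hA'
    have hp := pick_mem A' hA'tot
    rw [Finset.mem_filter] at hp
    refine measure _ hp.1 ?_
    have : Phi (pick A') = A' := hp.2
    rw [show (A.image ⇑(pick A') : Finset (Fin n)) = Phi (pick A') from rfl, this]
    exact Finset.ne_of_mem_erase hA'
  · have hinj : Set.InjOn pick ↑(total.erase A) := by
      intro A1 h1 A2 h2 hp12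
      have hm1 := pick_mem A1 (Finset.mem_of_mem_erase h1)
      have hm2 := pick_mem A2 (Finset.mem_of_mem_erase h2)
      rw [Finset.mem_filter] at hm1 hm2
      rw [← hm1.2, ← hm2.2, hp12]
    rw [Finset.sum_image (fun A1 h1 A2 h2 h12 => hinj h1 h2 h12)]
    have hsplit := Finset.add_sum_erase total
      (fun A' => vv (lam := lam) (s := s) (pick A' * g)) hAmem
    have hsplit2 : vv (lam := lam) (s := s) (pick A * g)
        + ∑ A' ∈ total.erase A, vv (lam := lam) (s := s) (pick A' * g)
        = ∑ A' ∈ total, vv (lam := lam) (s := s) (pick A' * g) := hsplit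
    rw [main1, hpickA] at hsplit2
    exact eq_neg_of_add_eq_zero_left hsplit2



/-! ### Spanning by standard polytabloids -/

/-- The span of the standard polytabloids. -/
def SPAN : Submodule ℤ (MonoidAlgebra ℤ (Perm (Fin n))) :=
  Submodule.span ℤ
    (Set.range (fun p : {σ : Perm (Fin n) // RowInc hs σ ∧ ColInc hs σ} =>
      vv (lam := lam) (s := s) p.val))

lemma spanning (g : Perm (Fin n)) : vv (lam := lam) (s := s) g ∈ SPAN hs := by
  set NN : Perm (Fin n) → ℕ := fun g =>
    (BB lam n - mr hs g) * (BB lam n + 1) + (BB lam n - mc hs g) with hNN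
  suffices h : ∀ k : ℕ, ∀ g : Perm (Fin n), NN g < k → vv (lam := lam) (s := s) g ∈ SPAN hs by
    exact h (NN g + 1) g (by omega)
  intro k
  induction k with
  | zero => exact fun g h => absurd h (Nat.not_lt_zero _)
  | succ k ih =>
    intro g hk
    by_cases hri : RowInc hs g
    · by_cases hci : ColInc hs g
      · exact Submodule.subset_span ⟨⟨g, hri, hci⟩, rfl⟩
      · obtain ⟨x, y, hcol, hrow, hyx⟩ := exists_adj_violation hs hci
        obtain ⟨T, hT, heq⟩ := garnir hs hri hcol hrow hyx
        rw [heq]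
        refine Submodule.neg_mem _ (Submodule.sum_mem _ fun σ hσ => ?_)
        refine ih (σ * g) ?_
        have h1 := hT σ hσ
        have h2 := mr_le_BB hs (σ * g)
        have h4 := mr_le_BB hs g
        have h5 := mc_le_BB hs g
        have h6 := mc_le_BB hs (σ * g)
        have key : (BB lam n - mr hs (σ * g)) * (BB lam n + 1)
            ≤ (BB lam n - mr hs g - 1) * (BB lam n + 1) :=
          Nat.mul_le_mul_right _ (by omega)
        have key2 : (BB lam n - mr hs g - 1) * (BB lam n + 1) + (BB lam n + 1)
            = (BB lam n - mr hs g) * (BB lam n + 1) := by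
          rw [← Nat.succ_mul]
          congr 1
          omega
        have hNNg : NN g < k + 1 := hk
        rw [hNN] at hNNg ⊢
        simp only at hNNg ⊢
        omega
    · obtain ⟨ρ, hρ, hvv, hmc⟩ := sort_step hs hri
      rw [← hvv]
      refine ih (g * ρ) ?_
      have h1 := mr_mul_rowStab hs (g := g) hρ
      have h2 := mc_le_BB hs (g * ρ)
      have h5 := mc_le_BB hs g
      have hNNg : NN g < k + 1 := hk
      rw [hNN] at hNNg ⊢
      simp only at hNNg ⊢
      rw [h1]
      omega

lemma vv_mem_range (g : Perm (Fin n)) :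
    vv (lam := lam) (s := s) g
      ∈ LinearMap.range (LinearMap.mulRight ℤ (youngSym lam s)) :=
  ⟨MonoidAlgebra.single g 1, by rw [LinearMap.mulRight_apply]; rfl⟩

lemma range_eq_le_span :
    LinearMap.range (LinearMap.mulRight ℤ (youngSym lam s)) ≤ SPAN hs := by
  rintro z ⟨f, rfl⟩
  rw [LinearMap.mulRight_apply]
  have hf : f = ∑ h ∈ f.coeff.support, MonoidAlgebra.single h (f.coeff h) := by
    conv_lhs => rw [← MonoidAlgebra.sum_coeff_single f]
    rfl
  rw [hf, Finset.sum_mul]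
  refine Submodule.sum_mem _ fun h _ => ?_
  have h1 : MonoidAlgebra.single h (f.coeff h) = (f.coeff h) • MonoidAlgebra.single h (1 : ℤ) := by
    rw [MonoidAlgebra.smul_single' (f.coeff h) h 1, mul_one]
  rw [h1, smul_mul_assoc]
  exact Submodule.smul_mem _ _ (spanning hs h)

lemma span_le_range :
    SPAN hs ≤ LinearMap.range (LinearMap.mulRight ℤ (youngSym lam s)) := by
  rw [SPAN, Submodule.span_le]
  rintro z ⟨p, rfl⟩
  exact vv_mem_range hs p.val

/-- Purity: the left ideal generated by the Young symmetrizer is saturated. -/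
lemma purity {d : ℤ} (hd : d ≠ 0) {x : MonoidAlgebra ℤ (Perm (Fin n))}
    (hx : d • x ∈ LinearMap.range (LinearMap.mulRight ℤ (youngSym lam s))) :
    x ∈ LinearMap.range (LinearMap.mulRight ℤ (youngSym lam s)) := by
  classical
  haveI : Fintype {σ : Perm (Fin n) // RowInc hs σ ∧ ColInc hs σ} := Fintype.ofFinite _
  have hx2 : d • x ∈ SPAN hs := range_eq_le_span hs hx
  rw [SPAN, Submodule.mem_span_range_iff_exists_fun ℤ] at hx2
  obtain ⟨c, hc⟩ := hx2
  clear hx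
  suffices H : ∀ k : ℕ, ∀ (c : {σ : Perm (Fin n) // RowInc hs σ ∧ ColInc hs σ} → ℤ)
      (x : MonoidAlgebra ℤ (Perm (Fin n))),
      (Finset.univ.filter (fun i => c i ≠ 0)).card ≤ k →
      (∑ i, c i • vv (lam := lam) (s := s) i.val = d • x) →
      x ∈ LinearMap.range (LinearMap.mulRight ℤ (youngSym lam s)) by
    exact H _ c x le_rfl hc
  intro k
  induction k with
  | zero =>
    intro c x hcard hsum
    have hzero : ∀ i, c i = 0 := by
      intro i
      by_contra hi
      have : i ∈ Finset.univ.filter (fun i => c i ≠ 0) :=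
        Finset.mem_filter.mpr ⟨Finset.mem_univ _, hi⟩
      have := Finset.card_pos.mpr ⟨i, this⟩
      omega
    have : d • x = 0 := by
      rw [← hsum]
      exact Finset.sum_eq_zero fun i _ => by rw [hzero i, zero_smul]
    rcases smul_eq_zero.mp this with h | h
    · exact absurd h hd
    · rw [h]; exact Submodule.zero_mem _
  | succ k ih =>
    intro c x hcard hsum
    rcases Finset.eq_empty_or_nonempty (Finset.univ.filter (fun i => c i ≠ 0)) with hemp | hne
    · have hzero : ∀ i, c i = 0 := by
        intro i
        by_contra hi
        have : i ∈ Finset.univ.filter (fun i => c i ≠ 0) :=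
          Finset.mem_filter.mpr ⟨Finset.mem_univ _, hi⟩
        rw [hemp] at this
        exact absurd this (Finset.notMem_empty _)
      have : d • x = 0 := by
        rw [← hsum]
        exact Finset.sum_eq_zero fun i _ => by rw [hzero i, zero_smul]
      rcases smul_eq_zero.mp this with h | h
      · exact absurd h hd
      · rw [h]; exact Submodule.zero_mem _
    · obtain ⟨istar, histar, hmax⟩ := Finset.exists_max_image _ (fun i => mc hs i.val) hne
      rw [Finset.mem_filter] at histar
      have hvanish : ∀ i2, i2 ≠ istar → c i2 ≠ 0 →
          (vv (lam := lam) (s := s) i2.val).coeff istar.val = 0 := by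
        intro i2 hne2 hc2
        by_contra hvv
        have hrep : ∃ ρ ∈ rowStab lam s, ∃ cc ∈ colStab lam s, i2.val * ρ * cc = istar.val := by
          by_contra hno
          push_neg at hno
          exact hvv (vv_apply_eq_zero (fun ρ hρ cc hcc => hno ρ hρ cc hcc))
        obtain ⟨ρ, hρ, cc, hcc, hrep⟩ := hrep
        have hmceq : mc hs istar.val = mc hs (i2.val * ρ) := by
          rw [← hrep]
          exact mc_mul_colStab hs hcc
        have hρ1 : ρ = 1 := by
          by_contra hρ1
          have hneq : i2.val * ρ ≠ i2.val := by
            intro hh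
            exact hρ1 (mul_left_cancel (a := i2.val) (by rw [hh, mul_one]))
          have hlt := mc_lt_of_mul hs i2.prop.1 ρ hρ hneq
          have hle := hmax i2 (Finset.mem_filter.mpr ⟨Finset.mem_univ _, hc2⟩)
          omega
        have hrep2 : i2.val * cc = istar.val := by
          rw [← hrep, hρ1, mul_one]
        have hstd : i2.val * cc = i2.val := by
          refine std_unique hs hcc i2.prop.1 i2.prop.2 ?_ ?_
          · rw [hrep2]; exact istar.prop.1
          · rw [hrep2]; exact istar.prop.2
        have hval : istar = i2 := Subtype.ext (by rw [← hrep2, hstd])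
        exact hne2 hval.symm
      -- coefficient extraction at istar
      have h6 : (∑ i, c i • vv (lam := lam) (s := s) i.val).coeff istar.val = c istar := by
        rw [MonoidAlgebra.coeff_sum, Finsupp.finset_sum_apply]
        rw [Finset.sum_eq_single istar]
        · rw [MonoidAlgebra.coeff_smul_apply, vv_apply_self hs, smul_eq_mul, mul_one]
        · intro i2 _ hne2
          rw [MonoidAlgebra.coeff_smul_apply]
          by_cases hc2 : c i2 = 0
          · rw [hc2, zero_smul]
          · rw [hvanish i2 hne2 hc2, smul_zero]
        · intro h
          exact absurd (Finset.mem_univ istar) h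
      have h7 : c istar = d * x.coeff istar.val := by
        rw [← h6, hsum, MonoidAlgebra.coeff_smul_apply, smul_eq_mul]
      set x' := x - (x.coeff istar.val) • vv (lam := lam) (s := s) istar.val with hx'def
      have hsplitA := Finset.add_sum_erase Finset.univ
        (fun i => (Function.update c istar 0) i • vv (lam := lam) (s := s) i.val)
        (Finset.mem_univ istar)
      have hsplitB := Finset.add_sum_erase Finset.univ
        (fun i => c i • vv (lam := lam) (s := s) i.val) (Finset.mem_univ istar)
      have htail : ∑ i ∈ Finset.univ.erase istar,
          (Function.update c istar 0) i • vv (lam := lam) (s := s) i.val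
          = ∑ i ∈ Finset.univ.erase istar, c i • vv (lam := lam) (s := s) i.val :=
        Finset.sum_congr rfl fun i hi => by
          rw [Function.update_of_ne (Finset.mem_erase.mp hi).1]
      have e1 : ∑ i, (Function.update c istar 0) i • vv (lam := lam) (s := s) i.val
          = ∑ i ∈ Finset.univ.erase istar, c i • vv (lam := lam) (s := s) i.val := by
        rw [← hsplitA]
        show Function.update c istar 0 istar • vv (lam := lam) (s := s) istar.val + _ = _
        rw [Function.update_self, zero_smul, zero_add, htail]
      have e2 : (∑ i, c i • vv (lam := lam) (s := s) i.val)
          = c istar • vv (lam := lam) (s := s) istar.val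
            + ∑ i ∈ Finset.univ.erase istar, c i • vv (lam := lam) (s := s) i.val := hsplitB.symm
      have hsum' : ∑ i, (Function.update c istar 0) i • vv (lam := lam) (s := s) i.val
          = d • x' := by
        rw [e1, hx'def, smul_sub, ← hsum, e2, smul_smul, ← h7]
        abel
      have hcard' : (Finset.univ.filter (fun i => Function.update c istar 0 i ≠ 0)).card ≤ k := by
        have hsubs : Finset.univ.filter (fun i => Function.update c istar 0 i ≠ 0)
            ⊆ (Finset.univ.filter (fun i => c i ≠ 0)).erase istar := by
          intro i hi
          rw [Finset.mem_filter] at hi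
          rcases eq_or_ne i istar with rfl | hne2
          · rw [Function.update_self] at hi
            exact absurd rfl hi.2
          · rw [Function.update_of_ne hne2] at hi
            exact Finset.mem_erase.mpr ⟨hne2, Finset.mem_filter.mpr ⟨Finset.mem_univ _, hi.2⟩⟩
        have h8 := Finset.card_le_card hsubs
        have h9 := Finset.card_erase_of_mem (a := istar)
          (s := Finset.univ.filter (fun i => c i ≠ 0))
          (Finset.mem_filter.mpr ⟨Finset.mem_univ istar, histar.2⟩)
        omega
      have hxmem' := ih (Function.update c istar 0) x' hcard' hsum'
      have hfin : x = x' + (x.coeff istar.val) • vv (lam := lam) (s := s) istar.val := by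
        rw [hx'def]
        abel
      rw [hfin]
      exact Submodule.add_mem _ hxmem' (Submodule.smul_mem _ _ (vv_mem_range hs istar.val))

end YSAux
end

open YS in
/-- The quotient `ℤS_n / ℤS_n·Y_s` of the integral group algebra by the left ideal generated
by the Young symmetrizer of a `λ`-tableau `s` is a free `ℤ`-module. -/
theorem quotient_by_youngSym_ideal_free (lam : YoungDiagram) (n : ℕ)
    (hn : lam.card = n) (s : ↥lam.cells → Fin n) (hs : Function.Bijective s) :
    Module.Free ℤ
      (MonoidAlgebra ℤ (Equiv.Perm (Fin n)) ⧸
        LinearMap.range (LinearMap.mulRight ℤ (youngSym lam s))) := by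
  classical
  haveI : Module.Finite ℤ (MonoidAlgebra ℤ (Perm (Fin n))) :=
    Module.Finite.equiv (MonoidAlgebra.coeffLinearEquiv ℤ).symm
  set V := LinearMap.range (LinearMap.mulRight ℤ (youngSym lam s)) with hV
  haveI : Module.Finite ℤ (MonoidAlgebra ℤ (Perm (Fin n)) ⧸ V) :=
    Module.Finite.of_surjective V.mkQ (Submodule.mkQ_surjective V)
  haveI : NoZeroSMulDivisors ℤ (MonoidAlgebra ℤ (Perm (Fin n)) ⧸ V) := by
    refine ⟨fun {d z} h => ?_⟩
    rcases eq_or_ne d 0 with rfl | hd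
    · exact Or.inl rfl
    · refine Or.inr ?_
      obtain ⟨w, rfl⟩ := Submodule.Quotient.mk_surjective V z
      rw [← Submodule.Quotient.mk_smul, Submodule.Quotient.mk_eq_zero] at h
      rw [Submodule.Quotient.mk_eq_zero]
      exact YSAux.purity hs hd h
  haveI : Module.IsTorsionFree ℤ (MonoidAlgebra ℤ (Perm (Fin n)) ⧸ V) :=
    Module.IsTorsionFree.of_smul_eq_zero fun _ _ h => eq_zero_or_eq_zero_of_smul_eq_zero h
  exact Module.free_of_finite_type_torsion_free'
end

section
/- Let n ≥ 1 and λ ⊢ n with λ ≠ trivial cases excluded: for any standard λ-tableau s different from the row-reading tableau T^λ, there exists i ∈ [1, n−1] such that i+1 occupies a strictly higher row of s than i, and the tableau s_i · s (obtained by swapping the positions of i and i+1) is standard and strictly dominates s in the dominance order on standard λ-tableaux. -/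
/-- `f` is a standard tableau of shape `lam` with entries `0, …, n-1`:
it is injective with values in `[0, n)` and strictly increasing along rows and columns. -/
def IsStdTab (lam : YoungDiagram) (n : ℕ) (f : ↥lam.cells → ℕ) : Prop :=
  Function.Injective f ∧ (∀ c, f c < n) ∧
    ∀ c d : ↥lam.cells, c.val.1 ≤ d.val.1 → c.val.2 ≤ d.val.2 → c ≠ d → f c < f d

/-- The row-reading tableau `T^λ`: the entry of a cell is the number of cells strictly
preceding it in the row-reading order. -/
def rowReadingTab (lam : YoungDiagram) : ↥lam.cells → ℕ := fun c =>
  (lam.cells.filter (fun d => d.1 < c.val.1 ∨ (d.1 = c.val.1 ∧ d.2 < c.val.2))).card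

/-- Dominance order on tableaux of shape `lam`: `f ⊴ g` iff for every `r`, the shape of the
subtableau of `f` with entries `< r` is dominated (partitionwise) by that of `g`. -/
def TabDomLE (lam : YoungDiagram) (f g : ↥lam.cells → ℕ) : Prop :=
  ∀ r k : ℕ,
    (lam.cells.attach.filter (fun c => c.val.1 < k ∧ f c < r)).card ≤
      (lam.cells.attach.filter (fun c => c.val.1 < k ∧ g c < r)).card

section aux
variable {lam : YoungDiagram} {n : ℕ} {f : ↥lam.cells → ℕ}

lemma std_surj (hn : lam.card = n) (hf : IsStdTab lam n f) :
    ∀ j < n, ∃ c, f c = j := by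
  intro j hj
  have h1 : lam.cells.attach.image f ⊆ Finset.range n := by
    intro x hx
    simp only [Finset.mem_image] at hx
    obtain ⟨c, -, rfl⟩ := hx
    exact Finset.mem_range.mpr (hf.2.1 c)
  have h2 : (lam.cells.attach.image f).card = n := by
    rw [Finset.card_image_of_injective _ hf.1, Finset.card_attach]; exact hn
  have h3 : lam.cells.attach.image f = Finset.range n :=
    Finset.eq_of_subset_of_card_le h1 (by rw [h2, Finset.card_range])
  have : j ∈ lam.cells.attach.image f := h3 ▸ Finset.mem_range.mpr hj
  simpa using this

lemma std_mono (hn : lam.card = n) (hf : IsStdTab lam n f)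
    (hinv : ∀ c d : ↥lam.cells, f d = f c + 1 → c.val.1 ≤ d.val.1) :
    ∀ m (c d : ↥lam.cells), f d = f c + m → c.val.1 ≤ d.val.1 := by
  intro m
  induction m with
  | zero =>
    intro c d h
    have : c = d := hf.1 (by omega)
    exact le_of_eq (by rw [this])
  | succ m ih =>
    intro c d h
    obtain ⟨e, he⟩ := std_surj hn hf (f c + m) (by have := hf.2.1 d; omega)
    exact le_trans (ih c e he) (hinv e d (by omega))

lemma std_reading (hn : lam.card = n) (hf : IsStdTab lam n f)
    (hinv : ∀ c d : ↥lam.cells, f d = f c + 1 → c.val.1 ≤ d.val.1) :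
    ∀ c d : ↥lam.cells,
      (d.val.1 < c.val.1 ∨ (d.val.1 = c.val.1 ∧ d.val.2 < c.val.2)) → f d < f c := by
  intro c d h
  rcases h with h | ⟨h1, h2⟩
  · by_contra hle
    push_neg at hle
    have := std_mono hn hf hinv (f d - f c) c d (by omega)
    omega
  · exact hf.2.2 d c (le_of_eq h1) (le_of_lt h2) (by
      intro he; rw [he] at h2; omega)

lemma std_eq_rowReading (hn : lam.card = n) (hf : IsStdTab lam n f)
    (hinv : ∀ c d : ↥lam.cells, f d = f c + 1 → c.val.1 ≤ d.val.1) :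
    f = rowReadingTab lam := by
  funext c
  have key : ∀ d : ↥lam.cells,
      (d.val.1 < c.val.1 ∨ (d.val.1 = c.val.1 ∧ d.val.2 < c.val.2)) ↔ f d < f c := by
    intro d
    constructor
    · exact std_reading hn hf hinv c d
    · intro hlt
      by_contra hQ
      push_neg at hQ
      have hdc : d ≠ c := by intro h; rw [h] at hlt; omega
      have : f c < f d := by
        apply std_reading hn hf hinv d c
        rcases Nat.lt_trichotomy c.val.1 d.val.1 with h | h | h
        · exact Or.inl h
        · refine Or.inr ⟨h, ?_⟩
          have h2 := hQ.2 h.symm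
          rcases Nat.lt_trichotomy c.val.2 d.val.2 with h' | h' | h'
          · exact h'
          · exfalso; exact hdc (Subtype.ext (Prod.ext h.symm h'.symm))
          · omega
        · exact absurd (hQ.1) (by omega)
      omega
  have h2 : (lam.cells.attach.filter (fun d => f d < f c)).image f = Finset.range (f c) := by
    apply Finset.Subset.antisymm
    · intro x hx
      simp only [Finset.mem_image, Finset.mem_filter] at hx
      obtain ⟨d, ⟨-, hd⟩, rfl⟩ := hx
      exact Finset.mem_range.mpr hd
    · intro j hj
      rw [Finset.mem_range] at hj
      obtain ⟨e, he⟩ := std_surj hn hf j (lt_trans hj (hf.2.1 c))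
      simp only [Finset.mem_image, Finset.mem_filter]
      exact ⟨e, ⟨Finset.mem_attach _ _, by omega⟩, he⟩
  have h3 : (lam.cells.attach.filter (fun d => f d < f c)).card = f c := by
    rw [← Finset.card_image_of_injective _ hf.1, h2, Finset.card_range]
  have h1 : rowReadingTab lam c = (lam.cells.attach.filter (fun d => f d < f c)).card := by
    unfold rowReadingTab
    refine (Finset.card_bij (fun d _ => d.val) ?_ ?_ ?_).symm
    · intro a ha
      rw [Finset.mem_filter] at ha ⊢
      exact ⟨a.2, (key a).mpr ha.2⟩
    · intro a _ b _ h
      exact Subtype.ext h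
    · intro b hb
      rw [Finset.mem_filter] at hb
      refine ⟨⟨b, hb.1⟩, ?_, rfl⟩
      rw [Finset.mem_filter]
      exact ⟨Finset.mem_attach _ _, (key ⟨b, hb.1⟩).mp hb.2⟩
  rw [h1, h3]

end aux

/-- If `s` is a standard `λ`-tableau different from the row-reading tableau `T^λ`, then some
`i+1` lies in a strictly higher row of `s` than `i`, and swapping `i` and `i+1` yields a
standard tableau strictly dominating `s`. -/


theorem exists_swap_standard_dominating (lam : YoungDiagram) (n : ℕ) (hn : lam.card = n)
    (f : ↥lam.cells → ℕ) (hf : IsStdTab lam n f) (hne : f ≠ rowReadingTab lam) :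
    ∃ i : ℕ, i + 1 < n ∧
      (∃ c d : ↥lam.cells, f c = i ∧ f d = i + 1 ∧ d.val.1 < c.val.1) ∧
      IsStdTab lam n (fun c => Equiv.swap i (i + 1) (f c)) ∧
      TabDomLE lam f (fun c => Equiv.swap i (i + 1) (f c)) ∧
      f ≠ (fun c => Equiv.swap i (i + 1) (f c)) := by
  by_cases H : ∃ c d : ↥lam.cells, f d = f c + 1 ∧ d.val.1 < c.val.1
  case neg =>
    push_neg at H
    exact absurd (std_eq_rowReading hn hf (fun c d h => H c d h)) hne
  obtain ⟨c, d, hfd, hrow⟩ := H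
  set i := f c with hi
  have hin : i + 1 < n := hfd ▸ hf.2.1 d
  -- d is strictly up and strictly right of c
  have hcol : c.val.2 < d.val.2 := by
    by_contra hle
    push_neg at hle
    have := hf.2.2 d c (le_of_lt hrow) hle (by
      intro h; rw [h] at hrow; omega)
    omega
  -- value characterizations
  have hvc : ∀ x : ↥lam.cells, f x = i → x = c := fun x hx => hf.1 (hx.trans hi)
  have hvd : ∀ x : ↥lam.cells, f x = i + 1 → x = d := fun x hx => hf.1 (hx.trans hfd.symm)
  have gval : ∀ x : ↥lam.cells, x ≠ c → x ≠ d →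
      Equiv.swap i (i + 1) (f x) = f x := by
    intro x hxc hxd
    exact Equiv.swap_apply_of_ne_of_ne (fun h => hxc (hvc x h)) (fun h => hxd (hvd x h))
  have gc : Equiv.swap i (i + 1) (f c) = i + 1 := by rw [← hi, Equiv.swap_apply_left]
  have gd : Equiv.swap i (i + 1) (f d) = i := by rw [hfd, Equiv.swap_apply_right]
  refine ⟨i, hin, ⟨c, d, rfl, hfd, hrow⟩, ⟨?_, ?_, ?_⟩, ?_, ?_⟩
  · exact (Equiv.swap i (i + 1)).injective.comp hf.1
  · intro x
    beta_reduce
    by_cases hxc : x = c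
    · rw [hxc, gc]; exact hin
    by_cases hxd : x = d
    · rw [hxd, gd]; omega
    · rw [gval x hxc hxd]; exact hf.2.1 x
  · intro a b h1 h2 hne'
    beta_reduce
    have hfab : f a < f b := hf.2.2 a b h1 h2 hne'
    by_cases hac : a = c
    · subst hac
      have hbd : b ≠ d := by
        intro h; subst h; omega
      rw [gc, gval b (fun h => hne' h.symm) hbd]
      have : f b ≠ i + 1 := fun h => hbd (hvd b h)
      omega
    by_cases had : a = d
    · subst had
      have hbc : b ≠ c := by
        intro h; subst h
        exact absurd hcol (by omega)
      rw [gd, gval b hbc (fun h => hne' h.symm)]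
      omega
    rw [gval a hac had]
    by_cases hbc : b = c
    · subst hbc
      rw [gc]
      have : f a ≠ i := fun h => hac (hvc a h)
      omega
    by_cases hbd : b = d
    · subst hbd
      rw [gd]
      have : f a ≠ i := fun h => hac (hvc a h)
      have : f a ≠ i + 1 := fun h => had (hvd a h)
      omega
    · rw [gval b hbc hbd]; exact hfab
  · -- dominance
    intro r k
    beta_reduce
    set A := lam.cells.attach.filter (fun x => x.val.1 < k ∧ f x < r) with hA
    set B := lam.cells.attach.filter
      (fun x => x.val.1 < k ∧ Equiv.swap i (i + 1) (f x) < r) with hB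
    have memA : ∀ x, x ∈ A ↔ x.val.1 < k ∧ f x < r := by
      intro x; rw [hA, Finset.mem_filter]
      exact ⟨fun h => h.2, fun h => ⟨Finset.mem_attach _ _, h⟩⟩
    have memB : ∀ x, x ∈ B ↔ x.val.1 < k ∧ Equiv.swap i (i + 1) (f x) < r := by
      intro x; rw [hB, Finset.mem_filter]
      exact ⟨fun h => h.2, fun h => ⟨Finset.mem_attach _ _, h⟩⟩
    have hother : ∀ x, x ≠ c → x ≠ d → (x ∈ A ↔ x ∈ B) := by
      intro x hxc hxd
      rw [memA, memB, gval x hxc hxd]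
    have hdAB : d ∈ A → d ∈ B := by
      rw [memA, memB, gd, hfd]; omega
    have hkey : c ∈ A → c ∉ B → d ∈ B ∧ d ∉ A := by
      rw [memA c, memB c, memB d, memA d, gc, gd, hfd]
      intro h1 h2
      refine ⟨⟨?_, ?_⟩, ?_⟩ <;> omega
    apply Finset.card_le_card_of_injOn
      (fun x => if x = c then (if c ∈ B then c else d) else x)
    · intro x hx
      beta_reduce
      by_cases hxc : x = c
      · rw [if_pos hxc]
        by_cases hcB : c ∈ B
        · rw [if_pos hcB]; exact hcB
        · rw [if_neg hcB]; exact (hkey (hxc ▸ hx) hcB).1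
      · rw [if_neg hxc]
        by_cases hxd : x = d
        · subst hxd; exact hdAB hx
        · exact (hother x hxc hxd).mp hx
    · intro x hx y hy hxy
      simp only at hxy
      by_cases hxc : x = c <;> by_cases hyc : y = c
      · rw [hxc, hyc]
      · rw [if_pos hxc, if_neg hyc] at hxy
        by_cases hcB : c ∈ B
        · rw [if_pos hcB] at hxy; exact absurd hxy.symm hyc
        · rw [if_neg hcB] at hxy
          exfalso
          exact (hkey (hxc ▸ hx) hcB).2 (hxy ▸ hy)
      · rw [if_neg hxc, if_pos hyc] at hxy
        by_cases hcB : c ∈ B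
        · rw [if_pos hcB] at hxy; exact absurd hxy hxc
        · rw [if_neg hcB] at hxy
          exfalso
          exact (hkey (hyc ▸ hy) hcB).2 (hxy ▸ hx)
      · rwa [if_neg hxc, if_neg hyc] at hxy
  · intro h
    have := congrFun h c
    beta_reduce at this
    rw [gc] at this
    omega
end
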